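/- arXiv:2111.05518 — 5 statements merged into one kernel-verified Lean document; each statement's English description precedes it below -/
import Mathlib

section
/- Let q be a prime power, let k, m, d be positive integers with q > m(m-1)/2 and d ≥ m-1, and let x_1, …, x_m be m distinct points of F_q^k. If f is chosen uniformly at random from F_q[X_1,…,X_k]_{≤d}, then the probability that f(x_i) = 0 for all i = 1, …, m is exactly q^{-m}; equivalently, the number of polynomials in F_q[X_1,…,X_k]_{≤d} vanishing at all of x_1,…,x_m equals q^{-m} times the total number of polynomials in F_q[X_1,…,X_k]_{≤d}. -/
/-- Over a finite field `F` (of prime power order `q = Fintype.card F`),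
if `q > m(m-1)/2` and `d ≥ m - 1`, and `x₁, …, xₘ` are distinct points of `F^k`, then the
number of polynomials in `F[X₁,…,X_k]` of total degree at most `d` vanishing at all the `xᵢ`
equals `q^{-m}` times the total number of polynomials of total degree at most `d`. -/
theorem statement_0 (F : Type) [Field F] [Fintype F]
    (k m d : ℕ) (hk : 0 < k) (hm : 0 < m) (hd0 : 0 < d)
    (hq : m * (m - 1) / 2 < Fintype.card F) (hd : m - 1 ≤ d)
    (x : Fin m → (Fin k → F)) (hx : Function.Injective x) :
    Fintype.card F ^ m *
        Nat.card {f : MvPolynomial (Fin k) F //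
          f.totalDegree ≤ d ∧ ∀ i, MvPolynomial.eval (x i) f = 0} =
      Nat.card {f : MvPolynomial (Fin k) F // f.totalDegree ≤ d} := by
  classical
  haveI : Nonempty (Fin k) := ⟨⟨0, hk⟩⟩
  set V := MvPolynomial.restrictTotalDegree (Fin k) F d with hVdef
  haveI : Finite V := Module.finite_of_finite F
  -- the evaluation linear map
  let ev : (Fin k → F) → MvPolynomial (Fin k) F →ₗ[F] F := fun y =>
    { toFun := MvPolynomial.eval y
      map_add' := fun a b => by simp
      map_smul' := fun c a => by
        simp [MvPolynomial.smul_eq_C_mul] }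
  let φ : V →ₗ[F] (Fin m → F) := LinearMap.pi fun i => (ev (x i)).comp V.subtype
  -- choice of separating coordinates
  have hne : ∀ i j : Fin m, ∃ a, i ≠ j → x i a ≠ x j a := by
    intro i j
    by_cases h : i = j
    · exact ⟨Classical.arbitrary _, fun h' => absurd h h'⟩
    · obtain ⟨a, ha⟩ := Function.ne_iff.mp (fun e : x i = x j => h (hx e))
      exact ⟨a, fun _ => ha⟩
  choose c hc using hne
  -- interpolation polynomials
  let N : Fin m → MvPolynomial (Fin k) F := fun i =>
    ∏ j ∈ Finset.univ.erase i,
      (MvPolynomial.X (c i j) - MvPolynomial.C (x j (c i j)))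
  have hNdeg : ∀ i, (N i).totalDegree ≤ d := by
    intro i
    refine le_trans (MvPolynomial.totalDegree_finset_prod _ _) (le_trans ?_ hd)
    calc ∑ j ∈ Finset.univ.erase i,
          (MvPolynomial.X (c i j) - MvPolynomial.C (x j (c i j))).totalDegree
        ≤ ∑ j ∈ Finset.univ.erase i, 1 := by
          refine Finset.sum_le_sum fun j _ => ?_
          refine le_trans (MvPolynomial.totalDegree_sub _ _) ?_
          simp [MvPolynomial.totalDegree_X, MvPolynomial.totalDegree_C]
      _ = m - 1 := by simp [Finset.card_erase_of_mem]
  have hNmem : ∀ i, N i ∈ V := fun i =>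
    (MvPolynomial.mem_restrictTotalDegree _ _ _).mpr (hNdeg i)
  have hNeval_ne : ∀ i, MvPolynomial.eval (x i) (N i) ≠ 0 := by
    intro i
    have : MvPolynomial.eval (x i) (N i) =
        ∏ j ∈ Finset.univ.erase i, (x i (c i j) - x j (c i j)) := by
      simp [N]
    rw [this]
    refine Finset.prod_ne_zero_iff.mpr fun j hj => ?_
    have hij : i ≠ j := fun h => (Finset.mem_erase.mp hj).1 h.symm
    exact sub_ne_zero.mpr (hc i j hij)
  have hNeval_zero : ∀ i j, i ≠ j → MvPolynomial.eval (x j) (N i) = 0 := by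
    intro i j hij
    have : MvPolynomial.eval (x j) (N i) =
        ∏ j' ∈ Finset.univ.erase i, (x j (c i j') - x j' (c i j')) := by
      simp [N]
    rw [this]
    exact Finset.prod_eq_zero (Finset.mem_erase.mpr ⟨fun h => hij h.symm, Finset.mem_univ _⟩)
      (by simp)
  -- surjectivity
  have hsurj : Function.Surjective φ := by
    intro v
    refine ⟨∑ i, (v i * (MvPolynomial.eval (x i) (N i))⁻¹) • ⟨N i, hNmem i⟩, ?_⟩
    funext j
    have : φ (∑ i, (v i * (MvPolynomial.eval (x i) (N i))⁻¹) • (⟨N i, hNmem i⟩ : V)) j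
        = ∑ i, (v i * (MvPolynomial.eval (x i) (N i))⁻¹) * MvPolynomial.eval (x j) (N i) := by
      rw [map_sum]
      simp [φ, ev, LinearMap.pi_apply, Finset.sum_apply]
    rw [this, Finset.sum_eq_single j]
    · rw [mul_assoc, inv_mul_cancel₀ (hNeval_ne j), mul_one]
    · intro i _ hij
      rw [hNeval_zero i j hij, mul_zero]
    · intro h; exact absurd (Finset.mem_univ j) h
  -- counting
  have h1 : Nat.card V = Nat.card (Fin m → F) * Nat.card (LinearMap.ker φ) := by
    rw [Submodule.card_eq_card_quotient_mul_card (LinearMap.ker φ),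
      Nat.card_congr (φ.quotKerEquivOfSurjective hsurj).toEquiv, mul_comm]
  have hcard1 : Nat.card {f : MvPolynomial (Fin k) F // f.totalDegree ≤ d} = Nat.card V :=
    Nat.card_congr (Equiv.subtypeEquivRight fun f =>
      (MvPolynomial.mem_restrictTotalDegree _ _ _).symm)
  have hcard2 : Nat.card {f : MvPolynomial (Fin k) F //
      f.totalDegree ≤ d ∧ ∀ i, MvPolynomial.eval (x i) f = 0}
      = Nat.card (LinearMap.ker φ) := by
    refine Nat.card_congr ?_
    refine { toFun := fun f => ⟨⟨f.1, (MvPolynomial.mem_restrictTotalDegree _ _ _).mpr f.2.1⟩, ?_⟩,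
             invFun := fun g => ⟨g.1.1, ?_, ?_⟩, left_inv := fun f => rfl, right_inv := fun g => rfl }
    · ext j
      simpa [φ, ev] using f.2.2 j
    · exact (MvPolynomial.mem_restrictTotalDegree _ _ _).mp g.1.2
    · intro i
      have := congrFun (LinearMap.mem_ker.mp g.2) i
      simpa [φ, ev] using this
  rw [hcard1, hcard2, h1]
  congr 1
  simp [Nat.card_eq_fintype_card]
end

section
/- Let q be a prime power, let k, m, d be positive integers with q > m(m-1)/2 and d ≥ m-1, let K be an algebraic closure of F_q, and let x_1, …, x_m be m distinct points of K^k. If f is chosen uniformly at random from F_q[X_1,…,X_k]_{≤d}, then the probability that f(x_i) = 0 for all i = 1, …, m (where f is evaluated at points of K^k via the embedding of F_q into K) is at most q^{-m}. -/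
open MvPolynomial

variable {F K : Type} [Field F] [Fintype F] [Field K] [Algebra F K]

def lform {k : ℕ} (c : Fin k → K) : (Fin k → F) →ₗ[F] K where
  toFun a := ∑ t, a t • c t
  map_add' a b := by simp [add_smul, Finset.sum_add_distrib]
  map_smul' r a := by simp [mul_smul, Finset.smul_sum]

lemma card_ker_le {k : ℕ} (L : (Fin k → F) →ₗ[F] K) (hL : L ≠ 0) :
    Nat.card {a : Fin k → F // L a = 0} ≤ Fintype.card F ^ (k - 1) := by
  classical
  have hker : LinearMap.ker L < ⊤ := lt_top_iff_ne_top.2 (by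
    simpa [LinearMap.ker_eq_top] using hL)
  have h1 : Module.finrank F (LinearMap.ker L) < k := by
    have := Submodule.finrank_lt (K := F) (V := Fin k → F) hker.ne
    simpa using this
  haveI : Fintype (LinearMap.ker L) := Fintype.ofFinite _
  have h2 : Fintype.card (LinearMap.ker L) = Fintype.card F ^ Module.finrank F (LinearMap.ker L) :=
    Module.card_eq_pow_finrank
  have h3 : Nat.card {a : Fin k → F // L a = 0} = Fintype.card (LinearMap.ker L) := by
    rw [← Nat.card_eq_fintype_card]
    exact Nat.card_congr (Equiv.subtypeEquivRight (fun a => by simp [LinearMap.mem_ker]))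
  rw [h3, h2]
  exact Nat.pow_le_pow_right Fintype.card_pos (by omega)

lemma exists_sep {k m : ℕ} (hk : 0 < k) (hq : m * (m - 1) / 2 < Fintype.card F)
    (x : Fin m → Fin k → K) (hx : Function.Injective x) :
    ∃ a : Fin k → F, Function.Injective fun i => ∑ t, a t • x i t := by
  classical
  by_contra hcon
  push_neg at hcon
  set q := Fintype.card F with hqdef
  -- the set of "bad" pairs
  set P : Finset (Fin m × Fin m) := Finset.univ.filter (fun p => p.1 < p.2) with hP
  set P' : Finset (Fin m × Fin m) := Finset.univ.filter (fun p => p.2 < p.1) with hP'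
  have hPcard : P.card ≤ m * (m - 1) / 2 := by
    have hbij : P.card = P'.card := by
      apply Finset.card_bij (fun p _ => (p.2, p.1))
      · intro p hp
        simp only [hP, hP', Finset.mem_filter, Finset.mem_univ, true_and] at hp ⊢
        exact hp
      · intro p hp p' hp' h
        simpa [Prod.ext_iff, and_comm] using h
      · intro p hp
        refine ⟨(p.2, p.1), ?_, by simp⟩
        simp only [hP, hP', Finset.mem_filter, Finset.mem_univ, true_and] at hp ⊢
        exact hp
    have hdisj : Disjoint P P' := by
      rw [Finset.disjoint_left]
      intro p hp hp'
      simp only [hP, hP', Finset.mem_filter] at hp hp'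
      exact absurd hp'.2 (not_lt.2 hp.2.le)
    have hsub : P ∪ P' ⊆ Finset.univ.offDiag := by
      intro p hp
      simp only [Finset.mem_union, hP, hP', Finset.mem_filter] at hp
      rcases hp with h | h
      · exact Finset.mem_offDiag.2 ⟨Finset.mem_univ _, Finset.mem_univ _, h.2.ne⟩
      · exact Finset.mem_offDiag.2 ⟨Finset.mem_univ _, Finset.mem_univ _, h.2.ne'⟩
    have h2 : P.card + P'.card ≤ m * m - m := by
      rw [← Finset.card_union_of_disjoint hdisj]
      calc (P ∪ P').card ≤ Finset.univ.offDiag.card := Finset.card_le_card hsub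
        _ = m * m - m := by rw [Finset.offDiag_card]; simp
    have : 2 * P.card ≤ m * (m - 1) := by
      rcases Nat.eq_zero_or_pos m with h | h
      · subst h; omega
      · have : m * m - m = m * (m - 1) := by cases m <;> simp [Nat.mul_sub, Nat.succ_mul]  <;> ring_nf <;> omega
        omega
    omega
  -- each bad pair gives few bad a's
  have hcover : (Finset.univ : Finset (Fin k → F)) ⊆
      P.biUnion (fun p => Finset.univ.filter
        (fun a : Fin k → F => lform (K := K) (fun t => x p.1 t - x p.2 t) a = 0)) := by
    intro a _
    obtain ⟨i, j, hij, hne⟩ := Function.not_injective_iff.1 (hcon a)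
    have key : ∀ i j : Fin m, (∑ t, a t • x i t) = ∑ t, a t • x j t →
        lform (K := K) (fun t => x i t - x j t) a = 0 := by
      intro i j h
      simp only [lform, LinearMap.coe_mk, AddHom.coe_mk, smul_sub, Finset.sum_sub_distrib, h, sub_self]
    rcases hne.lt_or_gt with h | h
    · exact Finset.mem_biUnion.2 ⟨(i, j), by simp [hP, h], by simp [key i j hij]⟩
    · exact Finset.mem_biUnion.2 ⟨(j, i), by simp [hP, h], by simp [key j i hij.symm]⟩
  have hbad : ∀ p ∈ P, (Finset.univ.filter
        (fun a : Fin k → F => lform (K := K) (fun t => x p.1 t - x p.2 t) a = 0)).card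
      ≤ q ^ (k - 1) := by
    intro p hp
    have hpne : p.1 ≠ p.2 := by simp only [hP, Finset.mem_filter] at hp; exact hp.2.ne
    have hxne : x p.1 ≠ x p.2 := fun h => hpne (hx h)
    obtain ⟨t0, ht0⟩ : ∃ t, x p.1 t - x p.2 t ≠ 0 := by
      by_contra h; push_neg at h
      exact hxne (funext fun t => by have := h t; linear_combination this)
    have hL : lform (F := F) (K := K) (fun t => x p.1 t - x p.2 t) ≠ 0 := by
      intro h
      have := LinearMap.congr_fun h (Pi.single t0 1)
      simp only [lform, LinearMap.coe_mk, AddHom.coe_mk, LinearMap.zero_apply] at this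
      rw [Finset.sum_eq_single t0 (fun b _ hb => by simp [Pi.single_apply, hb])
        (fun h => absurd (Finset.mem_univ t0) h)] at this
      simp at this
      exact ht0 this
    calc _ = Nat.card {a : Fin k → F // lform (K := K) (fun t => x p.1 t - x p.2 t) a = 0} := by
          rw [Nat.card_eq_fintype_card, Fintype.card_subtype]
      _ ≤ q ^ (k - 1) := card_ker_le _ hL
  have hfin : q ^ k ≤ P.card * q ^ (k - 1) := by
    calc q ^ k = (Finset.univ : Finset (Fin k → F)).card := by simp [q]
      _ ≤ _ := Finset.card_le_card hcover
      _ ≤ ∑ p ∈ P, (Finset.univ.filter (fun a : Fin k → F =>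
            lform (K := K) (fun t => x p.1 t - x p.2 t) a = 0)).card := Finset.card_biUnion_le
      _ ≤ ∑ _p ∈ P, q ^ (k - 1) := Finset.sum_le_sum hbad
      _ = P.card * q ^ (k - 1) := by rw [Finset.sum_const, smul_eq_mul]
  have hlt : P.card * q ^ (k - 1) < q ^ k := by
    have h1 : P.card * q ^ (k - 1) < q * q ^ (k - 1) :=
      Nat.mul_lt_mul_of_lt_of_le (lt_of_le_of_lt hPcard hq) le_rfl (Nat.pos_of_ne_zero (by positivity))
    calc P.card * q ^ (k-1) < q * q ^ (k-1) := h1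
        _ = q ^ k := by rw [← pow_succ']; congr 1; omega
  omega


/-- Over a finite field `F` (of prime power order `q = Fintype.card F`)
with algebraic closure `K`, if `q > m(m-1)/2` and `d ≥ m - 1`, and `x₁, …, xₘ` are distinct
points of `K^k`, then the number of polynomials in `F[X₁,…,X_k]` of total degree at most `d`
vanishing at all the `xᵢ` (evaluated in `K` via the embedding `F ↪ K`) is at most `q^{-m}`
times the total number of polynomials of total degree at most `d`. -/
theorem statement_1 (F K : Type) [Field F] [Fintype F] [Field K] [Algebra F K]
    [IsAlgClosure F K]
    (k m d : ℕ) (hk : 0 < k) (hm : 0 < m) (hd0 : 0 < d)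
    (hq : m * (m - 1) / 2 < Fintype.card F) (hd : m - 1 ≤ d)
    (x : Fin m → (Fin k → K)) (hx : Function.Injective x) :
    Fintype.card F ^ m *
        Nat.card {f : MvPolynomial (Fin k) F //
          f.totalDegree ≤ d ∧ ∀ i, MvPolynomial.aeval (x i) f = 0} ≤
      Nat.card {f : MvPolynomial (Fin k) F // f.totalDegree ≤ d} := by
  classical
  set q := Fintype.card F with hqdef
  obtain ⟨a, ha⟩ := exists_sep (K := K) hk hq x hx
  set V := restrictTotalDegree (Fin k) F d with hV
  set φ : V →ₗ[F] (Fin m → K) :=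
    (LinearMap.pi fun i => (aeval (x i)).toLinearMap) ∘ₗ V.subtype with hφ
  have hφapp : ∀ z : V, φ z = fun i => aeval (x i) (z : MvPolynomial (Fin k) F) := fun z => rfl
  -- the separating linear polynomial
  set p0 : MvPolynomial (Fin k) F := ∑ t, C (a t) * X t with hp0
  set e : Fin m → K := fun i => ∑ t, a t • x i t with he
  have hep0 : ∀ i, aeval (x i) p0 = e i := by
    intro i
    simp [hp0, he, Algebra.smul_def]
  have hp0deg : p0.totalDegree ≤ 1 := by
    refine (totalDegree_finset_sum _ _).trans (Finset.sup_le fun t _ => ?_)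
    calc (C (a t) * X t).totalDegree ≤ (C (a t)).totalDegree + (X t).totalDegree :=
        totalDegree_mul _ _
      _ ≤ 1 := by simp [totalDegree_X]
  -- the family of powers
  have hmem : ∀ j : Fin m, p0 ^ (j : ℕ) ∈ V := by
    intro j
    rw [hV, mem_restrictTotalDegree]
    calc (p0 ^ (j : ℕ)).totalDegree ≤ (j : ℕ) * p0.totalDegree := totalDegree_pow _ _
      _ ≤ (j : ℕ) * 1 := Nat.mul_le_mul_left _ hp0deg
      _ ≤ d := by have := j.isLt; omega
  set G : Fin m → V := fun j => ⟨p0 ^ (j : ℕ), hmem j⟩ with hG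
  have hφG : ∀ j, φ (G j) = fun i => e i ^ (j : ℕ) := by
    intro j
    funext i
    rw [hφapp]
    simp [hG, map_pow, hep0]
  -- linear independence over K hence over F
  have hLIK : LinearIndependent K (fun j : Fin m => fun i => e i ^ (j : ℕ)) := by
    have hunit : IsUnit (Matrix.vandermonde e) := by
      rw [Matrix.isUnit_iff_isUnit_det, isUnit_iff_ne_zero]
      exact Matrix.det_vandermonde_ne_zero_iff.2 ha
    have h2 := Matrix.linearIndependent_cols_iff_isUnit.2 hunit
    have heq : (fun j : Fin m => fun i => e i ^ (j : ℕ))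
        = fun j => (Matrix.vandermonde e).transpose j := by
      funext j i
      simp [Matrix.vandermonde, Matrix.transpose_apply]
    rw [heq]
    exact h2
  have hLIF : LinearIndependent F (fun j : Fin m => fun i : Fin m => e i ^ (j : ℕ)) := by
    refine hLIK.restrict_scalars ?_
    intro r s h
    have : algebraMap F K r = algebraMap F K s := by
      simpa [Algebra.smul_def] using h
    exact (algebraMap F K).injective this
  have hLIφG : LinearIndependent F (fun j => φ (G j)) := by
    have : (fun j => φ (G j)) = fun j : Fin m => fun i : Fin m => e i ^ (j : ℕ) :=
      funext hφG
    rw [this]; exact hLIF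
  -- lower bound on the rank of the range
  set v' : Fin m → LinearMap.range φ := fun j => ⟨φ (G j), LinearMap.mem_range_self _ _⟩ with hv'
  have hLIv' : LinearIndependent F v' :=
    LinearIndependent.of_comp (LinearMap.range φ).subtype (by exact hLIφG)
  have hrange : m ≤ Module.finrank F (LinearMap.range φ) := by
    simpa using hLIv'.fintype_card_le_finrank
  -- rank-nullity
  have hrn : Module.finrank F (LinearMap.range φ) + Module.finrank F (LinearMap.ker φ)
      = Module.finrank F V := LinearMap.finrank_range_add_finrank_ker φ
  -- cardinalities
  haveI : Finite V := Module.finite_of_finite F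
  haveI : Fintype V := Fintype.ofFinite _
  haveI : Fintype (LinearMap.ker φ) := Fintype.ofFinite _
  have hcardV : Nat.card {f : MvPolynomial (Fin k) F // f.totalDegree ≤ d}
      = q ^ Module.finrank F V := by
    rw [Nat.card_congr (Equiv.subtypeEquivRight
      (fun f => (mem_restrictTotalDegree (Fin k) d f).symm) :
      {f : MvPolynomial (Fin k) F // f.totalDegree ≤ d} ≃ V)]
    rw [Nat.card_eq_fintype_card]
    exact Module.card_eq_pow_finrank
  have hker : ∀ z : V, (φ z = 0 ↔ ∀ i, aeval (x i) (z : MvPolynomial (Fin k) F) = 0) := by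
    intro z
    rw [hφapp, _root_.funext_iff]
    simp
  have hcardW : Nat.card {f : MvPolynomial (Fin k) F //
        f.totalDegree ≤ d ∧ ∀ i, MvPolynomial.aeval (x i) f = 0}
      = q ^ Module.finrank F (LinearMap.ker φ) := by
    have : {f : MvPolynomial (Fin k) F //
        f.totalDegree ≤ d ∧ ∀ i, MvPolynomial.aeval (x i) f = 0} ≃ LinearMap.ker φ :=
      { toFun := fun f => ⟨⟨f.1, (mem_restrictTotalDegree (Fin k) d f.1).2 f.2.1⟩,
          LinearMap.mem_ker.2 ((hker _).2 f.2.2)⟩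
        invFun := fun g => ⟨(g.1 : MvPolynomial (Fin k) F),
          ⟨(mem_restrictTotalDegree (Fin k) d _).1 g.1.2,
            (hker g.1).1 (LinearMap.mem_ker.1 g.2)⟩⟩
        left_inv := fun f => rfl
        right_inv := fun g => rfl }
    rw [Nat.card_congr this, Nat.card_eq_fintype_card]
    exact Module.card_eq_pow_finrank (K := F) (V := LinearMap.ker φ)
  rw [hcardV, hcardW, ← pow_add]
  apply Nat.pow_le_pow_right Fintype.card_pos
  omega
end

section
/- Fix a positive integer k and set d = (k+1)^2 + 1. There exists a constant C > 0, depending only on k, such that for every prime power q with q > d(d−1)/2 the following holds: if f_1, …, f_k are chosen independently and uniformly at random from F_q[X_1,…,X_{k+1}]_{≤d}, and Z denotes the number of points x ∈ F_q^{k+1} with f_1(x) = ⋯ = f_k(x) = 0, then the probability that Z < q/2 is at most C·q^{1−d}. -/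
open MvPolynomial Finset

namespace S7

variable {F : Type} [Field F] [Fintype F] [DecidableEq F] {n : ℕ}

/-- the affine line through `P` and `Q` (as a finset of points). -/
def lineF (P Q : Fin n → F) : Finset (Fin n → F) :=
  Finset.image (fun c : F => P + c • (Q - P)) Finset.univ

lemma mem_lineF {P Q y : Fin n → F} : y ∈ lineF P Q ↔ ∃ c : F, y = P + c • (Q - P) := by
  simp [lineF, eq_comm]

lemma left_mem_lineF (P Q : Fin n → F) : P ∈ lineF P Q := mem_lineF.2 ⟨0, by simp⟩

lemma right_mem_lineF (P Q : Fin n → F) : Q ∈ lineF P Q :=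
  mem_lineF.2 ⟨1, by rw [one_smul]; abel⟩

lemma card_lineF (P Q : Fin n → F) : (lineF P Q).card ≤ Fintype.card F := by
  simpa [lineF] using Finset.card_image_le.trans (le_of_eq (by simp))

lemma lineF_eq {P Q z₁ z₂ : Fin n → F} (hPQ : P ≠ Q) (h1 : z₁ ∈ lineF P Q)
    (h2 : z₂ ∈ lineF P Q) (h12 : z₁ ≠ z₂) : lineF z₁ z₂ = lineF P Q := by
  obtain ⟨c₁, rfl⟩ := mem_lineF.1 h1
  obtain ⟨c₂, rfl⟩ := mem_lineF.1 h2
  have hu : Q - P ≠ 0 := sub_ne_zero.2 hPQ.symm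
  have hc : c₂ - c₁ ≠ 0 := by
    intro h
    exact h12 (by rw [sub_eq_zero] at h; rw [h])
  ext y
  simp only [mem_lineF]
  constructor
  · rintro ⟨s, rfl⟩
    exact ⟨c₁ + s * (c₂ - c₁), by match_scalars <;> ring⟩
  · rintro ⟨c, rfl⟩
    refine ⟨(c - c₁) / (c₂ - c₁), ?_⟩
    match_scalars <;> field_simp <;> ring

lemma lineF_inter_card {P Q P' Q' : Fin n → F} (h : P ≠ Q) (h' : P' ≠ Q')
    (hne : lineF P Q ≠ lineF P' Q') : (lineF P Q ∩ lineF P' Q').card ≤ 1 := by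
  by_contra hcard
  push_neg at hcard
  obtain ⟨z₁, hz₁, z₂, hz₂, h12⟩ := Finset.one_lt_card.1 hcard
  simp only [Finset.mem_inter] at hz₁ hz₂
  exact hne ((lineF_eq h hz₁.1 hz₂.1 h12).symm.trans (lineF_eq h' hz₁.2 hz₂.2 h12))

/-- `Sep c A z` : there is a polynomial of total degree at most `c` vanishing on `A`
but not at `z`. -/
def Sep (c : ℕ) (A : Finset (Fin n → F)) (z : Fin n → F) : Prop :=
  ∃ g : MvPolynomial (Fin n) F, g.totalDegree ≤ c ∧ (∀ y ∈ A, eval y g = 0) ∧ eval z g ≠ 0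

lemma Sep.monoDeg {c c' : ℕ} {A : Finset (Fin n → F)} {z} (h : Sep c A z) (hcc : c ≤ c') :
    Sep c' A z := by
  obtain ⟨g, h1, h2, h3⟩ := h
  exact ⟨g, h1.trans hcc, h2, h3⟩

lemma Sep.anti {c : ℕ} {A B : Finset (Fin n → F)} {z} (h : Sep c A z) (hBA : B ⊆ A) :
    Sep c B z := by
  obtain ⟨g, h1, h2, h3⟩ := h
  exact ⟨g, h1, fun y hy => h2 y (hBA hy), h3⟩

lemma totalDegree_X_sub_C_le (i : Fin n) (a : F) :
    (X i - C a : MvPolynomial (Fin n) F).totalDegree ≤ 1 := by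
  rw [sub_eq_add_neg]
  refine (totalDegree_add _ _).trans ?_
  simp [totalDegree_X, totalDegree_neg]

lemma exists_coord_form {y z : Fin n → F} (h : y ≠ z) :
    ∃ g : MvPolynomial (Fin n) F, g.totalDegree ≤ 1 ∧ eval y g = 0 ∧ eval z g ≠ 0 := by
  obtain ⟨i, hi⟩ := Function.ne_iff.1 h
  exact ⟨X i - C (y i), totalDegree_X_sub_C_le i (y i), by simp,
    by simp [sub_ne_zero]; exact fun hh => hi hh.symm⟩

lemma sep_self_card {A : Finset (Fin n → F)} {z} (hz : z ∉ A) : Sep A.card A z := by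
  classical
  induction A using Finset.induction with
  | empty => exact ⟨1, by simp, by simp, by simp⟩
  | @insert a A ha ih =>
    have hza : a ≠ z := fun h => hz (h ▸ Finset.mem_insert_self a A)
    obtain ⟨h₁, hd₁, hv₁, hz₁⟩ := exists_coord_form hza
    obtain ⟨g, hdg, hvg, hzg⟩ := ih (fun h => hz (Finset.mem_insert_of_mem h))
    refine ⟨h₁ * g, ?_, ?_, ?_⟩
    · refine (totalDegree_mul _ _).trans ?_
      rw [Finset.card_insert_of_notMem ha]
      omega
    · intro y hy
      rcases Finset.mem_insert.1 hy with rfl | hy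
      · simp [hv₁]
      · simp [hvg y hy]
    · simp only [map_mul]
      exact mul_ne_zero hz₁ hzg

lemma sep_of_card_le {c : ℕ} {A : Finset (Fin n → F)} {z} (hz : z ∉ A) (hc : A.card ≤ c) :
    Sep c A z := (sep_self_card hz).monoDeg hc

lemma exists_orth {u v : Fin n → F} (hu : u ≠ 0) (hv : ¬ ∃ e : F, v = e • u) :
    ∃ w : Fin n → F, ∑ i, w i * u i = 0 ∧ ∑ i, w i * v i ≠ 0 := by
  obtain ⟨c₀, hc₀⟩ := Function.ne_iff.1 hu
  simp only [Pi.zero_apply] at hc₀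
  have hex : ∃ c, u c₀ * v c ≠ u c * v c₀ := by
    by_contra h
    push_neg at h
    refine hv ⟨v c₀ / u c₀, funext fun c => ?_⟩
    have h2 := h c
    simp only [Pi.smul_apply, smul_eq_mul]
    rw [div_mul_eq_mul_div, eq_div_iff hc₀]
    linear_combination h2
  obtain ⟨c, hc⟩ := hex
  refine ⟨fun i => (if i = c then u c₀ else 0) - (if i = c₀ then u c else 0), ?_, ?_⟩
  · simp only [sub_mul, Finset.sum_sub_distrib, ite_mul, zero_mul,
      Finset.sum_ite_eq' Finset.univ, Finset.mem_univ, if_true]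
    ring
  · simp only [sub_mul, Finset.sum_sub_distrib, ite_mul, zero_mul,
      Finset.sum_ite_eq' Finset.univ, Finset.mem_univ, if_true]
    exact sub_ne_zero.2 hc

lemma exists_affine_form (w a : Fin n → F) :
    ∃ g : MvPolynomial (Fin n) F, g.totalDegree ≤ 1 ∧
      ∀ y : Fin n → F, eval y g = ∑ i, w i * (y i - a i) := by
  refine ⟨∑ i, C (w i) * (X i - C (a i)), ?_, ?_⟩
  · refine (totalDegree_finset_sum _ _).trans ?_
    refine Finset.sup_le fun i _ => ?_
    refine (totalDegree_mul _ _).trans ?_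
    have := totalDegree_X_sub_C_le (F := F) i (a i)
    simp only [totalDegree_C]
    omega
  · intro y
    simp [map_sum]

/-- a linear form vanishing on the line through `P, Q` but not at `z`. -/
lemma exists_line_form {P Q z : Fin n → F} (hPQ : P ≠ Q) (hz : z ∉ lineF P Q) :
    ∃ g : MvPolynomial (Fin n) F, g.totalDegree ≤ 1 ∧
      (∀ y ∈ lineF P Q, eval y g = 0) ∧ eval z g ≠ 0 := by
  have hu : Q - P ≠ 0 := sub_ne_zero.2 hPQ.symm
  have hv : ¬ ∃ e : F, z - P = e • (Q - P) := by
    rintro ⟨e, he⟩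
    exact hz (mem_lineF.2 ⟨e, by rw [← he]; abel⟩)
  obtain ⟨w, hw1, hw2⟩ := exists_orth hu hv
  obtain ⟨g, hdg, hevg⟩ := exists_affine_form w P
  refine ⟨g, hdg, ?_, ?_⟩
  · intro y hy
    obtain ⟨e, rfl⟩ := mem_lineF.1 hy
    rw [hevg]
    have : ∀ i, (P + e • (Q - P)) i - P i = e * (Q - P) i := by
      intro i; simp [mul_comm]
    calc ∑ i, w i * ((P + e • (Q - P)) i - P i) = ∑ i, e * (w i * (Q - P) i) := by
          refine Finset.sum_congr rfl fun i _ => ?_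
          rw [this i]; ring
      _ = e * ∑ i, w i * (Q - P) i := by rw [Finset.mul_sum]
      _ = 0 := by
          have : ∑ i, w i * (Q - P) i = 0 := by
            simpa [Pi.sub_apply] using hw1
          rw [this, mul_zero]
  · rw [hevg]
    simpa [Pi.sub_apply] using hw2

/-- a linear form vanishing at two points `a b` but not at `z ∉ line(a,b)`. -/
lemma exists_pair_form {a b z : Fin n → F} (hab : a ≠ b) (hz : z ∉ lineF a b) :
    ∃ g : MvPolynomial (Fin n) F, g.totalDegree ≤ 1 ∧
      eval a g = 0 ∧ eval b g = 0 ∧ eval z g ≠ 0 := by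
  obtain ⟨g, h1, h2, h3⟩ := exists_line_form hab hz
  exact ⟨g, h1, h2 a (left_mem_lineF a b), h2 b (right_mem_lineF a b), h3⟩


lemma filter_line_disjoint {A : Finset (Fin n → F)} {z a b : Fin n → F} (hz : z ∉ A)
    (hza : z ≠ a) (hzb : z ≠ b) (hb : b ∉ lineF z a) :
    Disjoint (A.filter (· ∈ lineF z a)) (A.filter (· ∈ lineF z b)) := by
  rw [Finset.disjoint_left]
  intro w hw1 hw2
  obtain ⟨hwA, hwl1⟩ := Finset.mem_filter.1 hw1
  obtain ⟨_, hwl2⟩ := Finset.mem_filter.1 hw2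
  have hwz : z ≠ w := fun h => hz (h ▸ hwA)
  have e1 : lineF z w = lineF z a := lineF_eq hza (left_mem_lineF z a) hwl1 hwz
  have e2 : lineF z w = lineF z b := lineF_eq hzb (left_mem_lineF z b) hwl2 hwz
  refine hb ?_
  rw [← e1, e2]
  exact right_mem_lineF z b

lemma sep_of_no_heavy_line :
    ∀ (c : ℕ) (A : Finset (Fin n → F)) (z : Fin n → F), z ∉ A → A.card ≤ 2 * c →
    (∀ a ∈ A, (A.filter (· ∈ lineF z a)).card ≤ c) → Sep c A z := by
  intro c
  induction c with
  | zero =>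
    intro A z hz hA _
    have hA0 : A = ∅ := Finset.card_eq_zero.1 (by omega)
    subst hA0
    exact ⟨1, by simp, by simp, by simp⟩
  | succ c ih =>
    intro A z hz hA hparts
    by_cases hsmall : A.card ≤ c + 1
    · exact sep_of_card_le hz hsmall
    push_neg at hsmall
    have hzA : ∀ y ∈ A, y ≠ z := fun y hy h => hz (h ▸ hy)
    have hAne : A.Nonempty := Finset.card_pos.1 (by omega)
    obtain ⟨a, haA, hamax⟩ :=
      Finset.exists_max_image A (fun y => (A.filter (· ∈ lineF z y)).card) hAne
    have hP₁card : (A.filter (· ∈ lineF z a)).card ≤ c + 1 := hparts a haA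
    have hnot : ¬ A ⊆ A.filter (· ∈ lineF z a) := by
      intro hsub
      have := Finset.card_le_card hsub
      omega
    have hne2 : (A \ A.filter (· ∈ lineF z a)).Nonempty := by
      rw [Finset.sdiff_nonempty]
      exact hnot
    obtain ⟨b, hbmem, hbmax⟩ :=
      Finset.exists_max_image (A \ A.filter (· ∈ lineF z a))
        (fun y => (A.filter (· ∈ lineF z y)).card) hne2
    obtain ⟨hbA, hbP₁⟩ := Finset.mem_sdiff.1 hbmem
    have hbline : b ∉ lineF z a := fun h => hbP₁ (Finset.mem_filter.2 ⟨hbA, h⟩)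
    have hba : b ≠ a := fun h => hbline (h ▸ right_mem_lineF z a)
    have hzab : z ∉ lineF a b := by
      intro hzl
      have hza : z ≠ a := Ne.symm (hzA a haA)
      have heq : lineF z a = lineF a b :=
        lineF_eq hba.symm hzl (left_mem_lineF a b) hza
      exact hbline (heq ▸ right_mem_lineF a b)
    obtain ⟨h, hdh, hha, hhb, hhz⟩ := exists_pair_form hba.symm hzab
    have hbea : b ∈ A.erase a := Finset.mem_erase.2 ⟨hba, hbA⟩
    set A' := (A.erase a).erase b with hA'def
    have hsubA : A' ⊆ A := ((A.erase a).erase_subset b).trans (A.erase_subset a)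
    have hcardA' : A'.card = A.card - 2 := by
      rw [hA'def, Finset.card_erase_of_mem hbea, Finset.card_erase_of_mem haA]
      omega
    have hmemA' : ∀ y ∈ A, y ≠ a → y ≠ b → y ∈ A' := by
      intro y hy h1 h2
      exact Finset.mem_erase.2 ⟨h2, Finset.mem_erase.2 ⟨h1, hy⟩⟩
    have hA'a : ∀ w ∈ A', w ≠ a := fun w hw =>
      (Finset.mem_erase.1 (Finset.mem_erase.1 hw).2).1
    have hA'b : ∀ w ∈ A', w ≠ b := fun w hw => (Finset.mem_erase.1 hw).1
    have hparts' : ∀ y ∈ A', (A'.filter (· ∈ lineF z y)).card ≤ c := by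
      intro y hyA'
      have hyA := hsubA hyA'
      have hyz : z ≠ y := Ne.symm (hzA y hyA)
      by_cases hy1 : y ∈ lineF z a
      · have hline : lineF z y = lineF z a :=
          lineF_eq (Ne.symm (hzA a haA)) (left_mem_lineF z a) hy1 hyz
        have hsubf : A'.filter (· ∈ lineF z y) ⊆ (A.filter (· ∈ lineF z a)).erase a := by
          intro w hw
          obtain ⟨hwA', hwl⟩ := Finset.mem_filter.1 hw
          exact Finset.mem_erase.2 ⟨hA'a w hwA',
            Finset.mem_filter.2 ⟨hsubA hwA', by rwa [hline] at hwl⟩⟩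
        have h1 := Finset.card_le_card hsubf
        rw [Finset.card_erase_of_mem
          (Finset.mem_filter.2 ⟨haA, right_mem_lineF z a⟩)] at h1
        exact h1.trans (Nat.sub_le_sub_right hP₁card 1)
      · by_cases hy2 : y ∈ lineF z b
        · have hline : lineF z y = lineF z b :=
            lineF_eq (Ne.symm (hzA b hbA)) (left_mem_lineF z b) hy2 hyz
          have hsubf : A'.filter (· ∈ lineF z y) ⊆ (A.filter (· ∈ lineF z b)).erase b := by
            intro w hw
            obtain ⟨hwA', hwl⟩ := Finset.mem_filter.1 hw
            exact Finset.mem_erase.2 ⟨hA'b w hwA',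
              Finset.mem_filter.2 ⟨hsubA hwA', by rwa [hline] at hwl⟩⟩
          have h1 := Finset.card_le_card hsubf
          rw [Finset.card_erase_of_mem
            (Finset.mem_filter.2 ⟨hbA, right_mem_lineF z b⟩)] at h1
          exact h1.trans (Nat.sub_le_sub_right (hparts b hbA) 1)
        · by_contra hcon
          push_neg at hcon
          have hAy : c + 1 ≤ (A.filter (· ∈ lineF z y)).card := by
            have := Finset.card_le_card
              (Finset.filter_subset_filter (· ∈ lineF z y) hsubA)
            omega
          have hyP₁ : y ∈ A \ A.filter (· ∈ lineF z a) :=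
            Finset.mem_sdiff.2 ⟨hyA, fun hy => hy1 (Finset.mem_filter.1 hy).2⟩
          have hAb : c + 1 ≤ (A.filter (· ∈ lineF z b)).card :=
            le_trans hAy (hbmax y hyP₁)
          have hAa : c + 1 ≤ (A.filter (· ∈ lineF z a)).card :=
            le_trans hAb (hamax b hbA)
          have hd1 : Disjoint (A.filter (· ∈ lineF z a)) (A.filter (· ∈ lineF z b)) :=
            filter_line_disjoint hz (Ne.symm (hzA a haA)) (Ne.symm (hzA b hbA)) hbline
          have hd2 : Disjoint (A.filter (· ∈ lineF z a)) (A.filter (· ∈ lineF z y)) :=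
            filter_line_disjoint hz (Ne.symm (hzA a haA)) hyz hy1
          have hd3 : Disjoint (A.filter (· ∈ lineF z b)) (A.filter (· ∈ lineF z y)) :=
            filter_line_disjoint hz (Ne.symm (hzA b hbA)) hyz hy2
          have hcup : ((A.filter (· ∈ lineF z a)) ∪ (A.filter (· ∈ lineF z b)) ∪
              (A.filter (· ∈ lineF z y))).card =
              (A.filter (· ∈ lineF z a)).card + (A.filter (· ∈ lineF z b)).card +
              (A.filter (· ∈ lineF z y)).card := by
            rw [Finset.card_union_of_disjoint, Finset.card_union_of_disjoint hd1]
            rw [Finset.disjoint_union_left]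
            exact ⟨hd2, hd3⟩
          have hsub3 : ((A.filter (· ∈ lineF z a)) ∪ (A.filter (· ∈ lineF z b)) ∪
              (A.filter (· ∈ lineF z y))) ⊆ A := by
            refine Finset.union_subset (Finset.union_subset ?_ ?_) ?_ <;>
              exact Finset.filter_subset _ _
          have := Finset.card_le_card hsub3
          omega
    have hsep' : Sep c A' z := by
      refine ih A' z (fun hzz => hz (hsubA hzz)) ?_ hparts'
      omega
    obtain ⟨g, hdg, hvg, hzg⟩ := hsep'
    refine ⟨h * g, ?_, ?_, ?_⟩
    · refine (totalDegree_mul _ _).trans ?_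
      omega
    · intro y hy
      by_cases h1 : y = a
      · simp [h1, hha]
      by_cases h2 : y = b
      · simp [h2, hhb]
      · simp [hvg y (hmemA' y hy h1 h2)]
    · simp only [map_mul]
      exact mul_ne_zero hhz hzg

lemma heavy_line_of_not_sep {dd : ℕ} {A : Finset (Fin n → F)} {z} (hz : z ∉ A)
    (hA : A.card ≤ 2 * dd) (h : ¬ Sep dd A z) :
    ∃ a ∈ A, dd + 1 ≤ (A.filter (· ∈ lineF z a)).card := by
  by_contra hc
  push_neg at hc
  exact h (sep_of_no_heavy_line dd A z hz hA (fun a ha => by have := hc a ha; omega))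


/-- sequentially separated list of points -/
def SeqSep (dd : ℕ) : List (Fin n → F) → Prop
  | [] => True
  | z :: l => Sep dd l.toFinset z ∧ SeqSep dd l

lemma SeqSep.notMem {dd : ℕ} {z : Fin n → F} {l : List (Fin n → F)}
    (h : SeqSep dd (z :: l)) : z ∉ l := by
  intro hz
  obtain ⟨⟨g, _, hv, hnz⟩, _⟩ := h
  exact hnz (hv z (List.mem_toFinset.2 hz))

lemma Sep.union {c c' : ℕ} {A B : Finset (Fin n → F)} {z} (h : Sep c A z) (h' : Sep c' B z) :
    Sep (c + c') (A ∪ B) z := by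
  obtain ⟨g, h1, h2, h3⟩ := h
  obtain ⟨g', h1', h2', h3'⟩ := h'
  refine ⟨g * g', (totalDegree_mul _ _).trans (by omega), ?_, ?_⟩
  · intro y hy
    rcases Finset.mem_union.1 hy with hy | hy
    · rw [map_mul, h2 y hy, zero_mul]
    · rw [map_mul, h2' y hy, mul_zero]
  · rw [map_mul]
    exact mul_ne_zero h3 h3'

lemma seqSep_of_short {dd : ℕ} :
    ∀ L : List (Fin n → F), L.Nodup → L.length ≤ dd + 1 → SeqSep dd L := by
  intro L
  induction L with
  | nil => intro _ _; trivial
  | cons z l ih =>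
    intro hnd hlen
    rw [List.length_cons] at hlen
    refine ⟨?_, ih (List.Nodup.of_cons hnd) (by omega)⟩
    refine sep_of_card_le ?_ ?_
    · rw [List.mem_toFinset]
      exact (List.nodup_cons.1 hnd).1
    · exact (List.toFinset_card_le l).trans (by omega)

lemma seqSep_append {dd : ℕ} :
    ∀ (l₁ l₂ : List (Fin n → F)), SeqSep dd l₂ → (l₁ ++ l₂).Nodup →
    (∀ z ∈ l₁, Sep dd (((l₁ ++ l₂).toFinset).erase z) z) → SeqSep dd (l₁ ++ l₂) := by
  intro l₁
  induction l₁ with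
  | nil => intro l₂ h _ _; simpa using h
  | cons z l ih =>
    intro l₂ h2 hnd hsep
    rw [List.cons_append]
    refine ⟨?_, ih l₂ h2 (by rw [List.cons_append] at hnd; exact hnd.of_cons) ?_⟩
    · refine (hsep z List.mem_cons_self).anti ?_
      intro y hy
      rw [List.mem_toFinset] at hy
      refine Finset.mem_erase.2 ⟨?_, ?_⟩
      · intro hyz
        subst hyz
        rw [List.cons_append] at hnd
        exact (List.nodup_cons.1 hnd).1 hy
      · rw [List.mem_toFinset, List.cons_append]
        exact List.mem_cons_of_mem z hy
    · intro w hw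
      refine (hsep w (List.mem_cons_of_mem z hw)).anti ?_
      intro y hy
      obtain ⟨hyw, hy2⟩ := Finset.mem_erase.1 hy
      refine Finset.mem_erase.2 ⟨hyw, ?_⟩
      rw [List.mem_toFinset] at hy2 ⊢
      rw [List.cons_append]
      exact List.mem_cons_of_mem z hy2

section Shape

variable {t : ℕ} {α : Type*} [DecidableEq α]

/-- first index attaining the same value -/
def shape (x : Fin t → α) : Fin t → Fin t := fun j =>
  (Finset.univ.filter (fun j' => x j' = x j)).min' ⟨j, by simp⟩

lemma shape_spec (x : Fin t → α) (j : Fin t) : x (shape x j) = x j := by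
  have := Finset.min'_mem (Finset.univ.filter (fun j' => x j' = x j)) ⟨j, by simp⟩
  exact (Finset.mem_filter.1 this).2

lemma shape_eq_of_eq (x : Fin t → α) {j j' : Fin t} (h : x j = x j') :
    shape x j = shape x j' := by
  unfold shape
  congr 1
  ext j''
  simp [h]

lemma shape_idem (x : Fin t → α) (j : Fin t) : shape x (shape x j) = shape x j :=
  shape_eq_of_eq x (shape_spec x j)

end Shape

section Prob

variable (F k d)

/-- the space of polynomials of total degree at most `d` in `k+1` variables -/
abbrev PV := ↥(restrictTotalDegree (Fin (k + 1)) F d)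

noncomputable instance : Fintype (PV F k d) := by
  have : Finite (PV F k d) := Module.finite_of_finite F
  exact Fintype.ofFinite _

/-- the sample space : `k` independent uniform elements of `PV` -/
abbrev Om := Fin k → PV F k d

variable {F k d}

/-- evaluation of an element of `PV` -/
noncomputable def evV (x : Fin (k + 1) → F) (v : PV F k d) : F := eval x (v : MvPolynomial (Fin (k + 1)) F)

lemma evV_add (x : Fin (k + 1) → F) (v w : PV F k d) : evV x (v + w) = evV x v + evV x w := by
  simp [evV]

lemma evV_smul (x : Fin (k + 1) → F) (c : F) (v : PV F k d) : evV x (c • v) = c * evV x v := by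
  simp only [evV, Submodule.coe_smul, smul_eq_C_mul, map_mul, eval_C]

lemma evV_sub (x : Fin (k + 1) → F) (v w : PV F k d) : evV x (v - w) = evV x v - evV x w := by
  simp [evV]

/-- the number of `v ∈ PV` vanishing on a subset of a separated list is as expected. -/
lemma card_vanish : ∀ (L : List (Fin (k + 1) → F)), SeqSep d L →
    ∀ T : Finset (Fin (k + 1) → F), T ⊆ L.toFinset →
    ((Finset.univ.filter (fun v : PV F k d => ∀ x ∈ T, evV x v = 0)).card)
      * (Fintype.card F) ^ T.card = Fintype.card (PV F k d) := by
  intro L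
  induction L with
  | nil =>
    intro _ T hT
    have : T = ∅ := Finset.subset_empty.1 (by simpa using hT)
    subst this
    simp [Finset.filter_true_of_mem, Finset.card_univ]
  | cons z l ih =>
    intro hL T hT
    obtain ⟨hsep, hl⟩ := hL
    by_cases hzT : z ∈ T
    · have hzl : z ∉ l := SeqSep.notMem ⟨hsep, hl⟩
      have hTe : T.erase z ⊆ l.toFinset := by
        intro y hy
        obtain ⟨hyz, hyT⟩ := Finset.mem_erase.1 hy
        have := hT hyT
        rw [List.toFinset_cons, Finset.mem_insert] at this
        exact this.resolve_left hyz
      obtain ⟨g, hdg, hvg, hzg⟩ := hsep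
      have hmem : (eval z g)⁻¹ • g ∈ restrictTotalDegree (Fin (k + 1)) F d :=
        (mem_restrictTotalDegree _ _ _).2 ((totalDegree_smul_le _ _).trans hdg)
      set gV : PV F k d := ⟨(eval z g)⁻¹ • g, hmem⟩ with hgV
      have hgz : evV z gV = 1 := by
        simp only [evV, hgV, Submodule.coe_smul, smul_eq_C_mul, map_mul, eval_C]
        exact inv_mul_cancel₀ hzg
      have hgvan : ∀ y ∈ l.toFinset, evV y gV = 0 := by
        intro y hy
        simp only [evV, hgV, Submodule.coe_smul, smul_eq_C_mul, map_mul, eval_C]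
        rw [hvg y hy, mul_zero]
      have hkey : (Finset.univ.filter
            (fun v : PV F k d => ∀ x ∈ T.erase z, evV x v = 0)).card =
          (Finset.univ.filter (fun v : PV F k d => ∀ x ∈ T, evV x v = 0)).card
            * (Fintype.card F) := by
        rw [← Finset.card_univ (α := F), ← Finset.card_product]
        refine Finset.card_bij'
          (fun (w : PV F k d) _ => ((w - (evV z w) • gV, evV z w) : PV F k d × F))
          (fun (pr : PV F k d × F) _ => pr.1 + pr.2 • gV) ?_ ?_ ?_ ?_
        · intro w hw
          simp only [Finset.mem_filter, Finset.mem_univ, true_and] at hw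
          rw [Finset.mem_product]
          refine ⟨?_, Finset.mem_univ _⟩
          simp only [Finset.mem_filter, Finset.mem_univ, true_and]
          intro x hx
          rw [evV_sub, evV_smul]
          by_cases hxz : x = z
          · subst hxz
            rw [hgz, mul_one, sub_self]
          · have hxe : x ∈ T.erase z := Finset.mem_erase.2 ⟨hxz, hx⟩
            rw [hw x hxe, hgvan x (hTe hxe), mul_zero, sub_zero]
        · intro pr hpr
          rw [Finset.mem_product] at hpr
          obtain ⟨hpr1, -⟩ := hpr
          simp only [Finset.mem_filter, Finset.mem_univ, true_and] at hpr1 ⊢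
          intro x hx
          rw [evV_add, evV_smul, hpr1 x (Finset.mem_of_mem_erase hx),
            hgvan x (hTe hx), mul_zero, add_zero]
        · intro w _
          simp only
          abel
        · intro pr hpr
          rw [Finset.mem_product] at hpr
          obtain ⟨hpr1, -⟩ := hpr
          simp only [Finset.mem_filter, Finset.mem_univ, true_and] at hpr1
          have ha : evV z (pr.1 + pr.2 • gV) = pr.2 := by
            rw [evV_add, evV_smul, hpr1 z hzT, hgz, mul_one, zero_add]
          rw [Prod.ext_iff]
          refine ⟨?_, ha⟩
          simp only [ha]
          abel
      have hTcard : T.card = (T.erase z).card + 1 := by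
        rw [Finset.card_erase_of_mem hzT]
        have : 1 ≤ T.card := Finset.card_pos.2 ⟨z, hzT⟩
        omega
      have hih := ih hl (T.erase z) hTe
      rw [hkey] at hih
      rw [hTcard, pow_succ, ← mul_assoc]
      calc (Finset.univ.filter (fun v : PV F k d => ∀ x ∈ T, evV x v = 0)).card *
            (Fintype.card F) ^ (T.erase z).card * Fintype.card F
          = (Finset.univ.filter (fun v : PV F k d => ∀ x ∈ T, evV x v = 0)).card *
            Fintype.card F * (Fintype.card F) ^ (T.erase z).card := by ring
        _ = Fintype.card (PV F k d) := hih
    · refine ih hl T ?_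
      intro y hy
      have := hT hy
      rw [List.toFinset_cons, Finset.mem_insert] at this
      exact this.resolve_left (fun h => hzT (h ▸ hy))

lemma card_vanish_om (L : List (Fin (k + 1) → F)) (hL : SeqSep d L)
    (T : Finset (Fin (k + 1) → F)) (hT : T ⊆ L.toFinset) :
    ((Finset.univ.filter (fun f : Om F k d => ∀ i, ∀ x ∈ T, evV x (f i) = 0)).card)
      * (Fintype.card F) ^ (k * T.card) = Fintype.card (Om F k d) := by
  have h1 : (Finset.univ.filter (fun f : Om F k d => ∀ i, ∀ x ∈ T, evV x (f i) = 0)).card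
      = (Finset.univ.filter (fun v : PV F k d => ∀ x ∈ T, evV x v = 0)).card ^ k := by
    calc (Finset.univ.filter (fun f : Om F k d => ∀ i, ∀ x ∈ T, evV x (f i) = 0)).card
        = Fintype.card {f : Om F k d // ∀ i, ∀ x ∈ T, evV x (f i) = 0} :=
          (Fintype.card_subtype _).symm
      _ = Fintype.card (∀ _i : Fin k, {v : PV F k d // ∀ x ∈ T, evV x v = 0}) :=
          Fintype.card_congr (Equiv.subtypePiEquivPi
            (p := fun (_ : Fin k) (v : PV F k d) => ∀ x ∈ T, evV x v = 0))
      _ = Fintype.card {v : PV F k d // ∀ x ∈ T, evV x v = 0} ^ k := by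
          rw [Fintype.card_pi]
          simp
      _ = (Finset.univ.filter (fun v : PV F k d => ∀ x ∈ T, evV x v = 0)).card ^ k := by
          rw [Fintype.card_subtype]
  rw [h1]
  have h2 : (Fintype.card F) ^ (k * T.card) = ((Fintype.card F) ^ T.card) ^ k := by
    rw [mul_comm, pow_mul]
  rw [h2, ← mul_pow, card_vanish L hL T hT]
  rw [Fintype.card_fun, Fintype.card_fin]

/-- the uniform probability of a point being a zero of all `k` polynomials -/
noncomputable def pp (F : Type) [Field F] [Fintype F] (k : ℕ) : ℝ :=
  ((Fintype.card F : ℝ))⁻¹ ^ k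

noncomputable def ind (x : Fin (k + 1) → F) (f : Om F k d) : ℝ :=
  if ∀ i, evV x (f i) = 0 then 1 else 0

noncomputable def WW (x : Fin (k + 1) → F) (f : Om F k d) : ℝ := ind x f - pp F k

lemma hq1 : (1 : ℝ) ≤ (Fintype.card F : ℝ) := by
  exact_mod_cast Fintype.card_pos

lemma pp_nonneg : 0 ≤ pp F k := by
  unfold pp
  positivity

lemma pp_le_one : pp F k ≤ 1 := by
  unfold pp
  refine pow_le_one₀ (by positivity) ?_
  rw [inv_le_one_iff₀]
  right
  exact hq1

lemma ind_nonneg (x : Fin (k + 1) → F) (f : Om F k d) : 0 ≤ ind x f := by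
  unfold ind
  split <;> norm_num

lemma ind_le_one (x : Fin (k + 1) → F) (f : Om F k d) : ind x f ≤ 1 := by
  unfold ind
  split <;> norm_num

lemma abs_WW_le_one (x : Fin (k + 1) → F) (f : Om F k d) : |WW x f| ≤ 1 := by
  rw [abs_le]
  have h1 := pp_nonneg (F := F) (k := k)
  have h2 := pp_le_one (F := F) (k := k)
  have h3 := ind_nonneg (d := d) x f
  have h4 := ind_le_one (d := d) x f
  unfold WW
  constructor <;> nlinarith

lemma abs_WW_le (x : Fin (k + 1) → F) (f : Om F k d) : |WW x f| ≤ ind x f + pp F k := by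
  rw [abs_le]
  have h1 := pp_nonneg (F := F) (k := k)
  have h3 := ind_nonneg (d := d) x f
  unfold WW
  constructor <;> nlinarith

/-- **vanishing lemma** : if some point of the tuple occurs exactly once and is
separated from the other points, the corresponding term vanishes. -/
lemma term_zero {t : ℕ} (x : Fin t → (Fin (k + 1) → F)) (j₀ : Fin t)
    (hs : ∀ j, x j = x j₀ → j = j₀)
    (hsep : Sep d ((Finset.univ.image x).erase (x j₀)) (x j₀)) :
    ∑ f : Om F k d, ∏ j, WW (x j) f = 0 := by
  obtain ⟨g, hdg, hvg, hzg⟩ := hsep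
  have hmem : (eval (x j₀) g)⁻¹ • g ∈ restrictTotalDegree (Fin (k + 1)) F d :=
    (mem_restrictTotalDegree _ _ _).2 ((totalDegree_smul_le _ _).trans hdg)
  set gV : PV F k d := ⟨(eval (x j₀) g)⁻¹ • g, hmem⟩ with hgV
  have hgz : evV (x j₀) gV = 1 := by
    simp only [evV, hgV, Submodule.coe_smul, smul_eq_C_mul, map_mul, eval_C]
    exact inv_mul_cancel₀ hzg
  have hgvan : ∀ j, j ≠ j₀ → evV (x j) gV = 0 := by
    intro j hj
    have hmem2 : x j ∈ (Finset.univ.image x).erase (x j₀) :=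
      Finset.mem_erase.2 ⟨fun h => hj (hs j h), Finset.mem_image.2 ⟨j, Finset.mem_univ j, rfl⟩⟩
    simp only [evV, hgV, Submodule.coe_smul, smul_eq_C_mul, map_mul, eval_C]
    rw [hvg _ hmem2, mul_zero]
  have hqne : (Fintype.card F : ℝ) ≠ 0 := by
    have := hq1 (F := F); linarith
  have htrans : ∀ (a : Fin k → F), ∑ f : Om F k d, ∏ j, WW (x j) f
      = ∑ f : Om F k d, ∏ j, WW (x j) (f + fun i => a i • gV) := by
    intro a
    exact (Fintype.sum_equiv (Equiv.addRight (fun i => a i • gV : Om F k d))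
      (fun f => ∏ j, WW (x j) (f + fun i => a i • gV))
      (fun f => ∏ j, WW (x j) f) (fun f => rfl)).symm
  have hmain : (Fintype.card (Fin k → F) : ℝ) * (∑ f : Om F k d, ∏ j, WW (x j) f) = 0 := by
    calc (Fintype.card (Fin k → F) : ℝ) * (∑ f : Om F k d, ∏ j, WW (x j) f)
        = ∑ _a : Fin k → F, (∑ f : Om F k d, ∏ j, WW (x j) f) := by
          rw [Finset.sum_const, Finset.card_univ, nsmul_eq_mul]
      _ = ∑ a : Fin k → F, ∑ f : Om F k d, ∏ j, WW (x j) (f + fun i => a i • gV) :=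
          Finset.sum_congr rfl (fun a _ => htrans a)
      _ = ∑ f : Om F k d, ∑ a : Fin k → F, ∏ j, WW (x j) (f + fun i => a i • gV) :=
          Finset.sum_comm
      _ = ∑ f : Om F k d, ∑ a : Fin k → F,
            (WW (x j₀) (f + fun i => a i • gV)) * ∏ j ∈ Finset.univ.erase j₀, WW (x j) f := by
          refine Finset.sum_congr rfl fun f _ => Finset.sum_congr rfl fun a _ => ?_
          rw [← Finset.mul_prod_erase Finset.univ _ (Finset.mem_univ j₀)]
          congr 1
          refine Finset.prod_congr rfl fun j hj => ?_
          have hjne : j ≠ j₀ := (Finset.mem_erase.1 hj).1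
          unfold WW ind
          have hiff : (∀ i, evV (x j) ((f + fun i => a i • gV) i) = 0)
              ↔ (∀ i, evV (x j) (f i) = 0) := by
            refine forall_congr' fun i => ?_
            have : (f + fun i => a i • gV) i = f i + a i • gV := rfl
            rw [this, evV_add, evV_smul, hgvan j hjne, mul_zero, add_zero]
          rw [if_congr hiff rfl rfl]
      _ = ∑ f : Om F k d, (∑ a : Fin k → F, WW (x j₀) (f + fun i => a i • gV)) *
            (∏ j ∈ Finset.univ.erase j₀, WW (x j) f) := by
          refine Finset.sum_congr rfl fun f _ => ?_
          rw [Finset.sum_mul]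
      _ = 0 := by
          refine Finset.sum_eq_zero fun f _ => ?_
          have hzero : ∑ a : Fin k → F, WW (x j₀) (f + fun i => a i • gV) = 0 := by
            unfold WW
            rw [Finset.sum_sub_distrib, Finset.sum_const, Finset.card_univ]
            have hcond : ∀ a : Fin k → F,
                (∀ i, evV (x j₀) ((f + fun i => a i • gV) i) = 0)
                ↔ a = fun i => - evV (x j₀) (f i) := by
              intro a
              rw [funext_iff]
              refine forall_congr' fun i => ?_
              have : (f + fun i => a i • gV) i = f i + a i • gV := rfl
              rw [this, evV_add, evV_smul, hgz, mul_one, add_comm, add_eq_zero_iff_eq_neg]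
            have hindsum : ∑ a : Fin k → F, ind (x j₀) (f + fun i => a i • gV) = 1 := by
              unfold ind
              rw [Finset.sum_congr rfl (fun a _ => if_congr (hcond a) rfl rfl)]
              rw [Finset.sum_ite_eq' Finset.univ (fun i => - evV (x j₀) (f i)) (fun _ => (1:ℝ))]
              simp
            rw [hindsum, Fintype.card_fun, nsmul_eq_mul]
            unfold pp
            rw [Nat.cast_pow, Fintype.card_fin, ← mul_pow, mul_inv_cancel₀ hqne]
            norm_num
          rw [hzero, zero_mul]
  rcases mul_eq_zero.1 hmain with h | h
  · exfalso
    have : (0:ℝ) < (Fintype.card (Fin k → F) : ℝ) := by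
      exact_mod_cast Fintype.card_pos
    rw [h] at this
    exact lt_irrefl 0 this
  · exact h

/-- **magnitude lemma** : a term is bounded using a separated subset `T` of its points. -/
lemma abs_term_le {t : ℕ} (ht : 0 < t) (x : Fin t → (Fin (k + 1) → F))
    (T : Finset (Fin (k + 1) → F)) (hTim : T ⊆ Finset.univ.image x)
    (L : List (Fin (k + 1) → F)) (hL : SeqSep d L) (hTL : T ⊆ L.toFinset) :
    |∑ f : Om F k d, ∏ j, WW (x j) f| ≤
      (Fintype.card (Om F k d) : ℝ) * (2 * pp F k) ^ T.card := by
  classical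
  haveI : Inhabited (Fin t) := ⟨⟨0, ht⟩⟩
  set ι : (Fin (k + 1) → F) → Fin t :=
    fun z => if h : ∃ j, x j = z then h.choose else default with hιdef
  have hι : ∀ z ∈ T, x (ι z) = z := by
    intro z hz
    obtain ⟨j, _, hj⟩ := Finset.mem_image.1 (hTim hz)
    have hex : ∃ j, x j = z := ⟨j, hj⟩
    simp only [hιdef, dif_pos hex]
    exact hex.choose_spec
  have hpt : ∀ f : Om F k d, ∏ j, |WW (x j) f| ≤ ∏ z ∈ T, (ind z f + pp F k) := by
    intro f
    have hJsub : T.image ι ⊆ Finset.univ := Finset.subset_univ _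
    have hsplit : (∏ j ∈ Finset.univ \ T.image ι, |WW (x j) f|) * ∏ j ∈ T.image ι, |WW (x j) f|
        = ∏ j, |WW (x j) f| := Finset.prod_sdiff hJsub
    have h1 : ∏ j ∈ Finset.univ \ T.image ι, |WW (x j) f| ≤ 1 :=
      Finset.prod_le_one (fun j _ => abs_nonneg _) (fun j _ => abs_WW_le_one _ _)
    have h2 : (0:ℝ) ≤ ∏ j ∈ T.image ι, |WW (x j) f| :=
      Finset.prod_nonneg (fun j _ => abs_nonneg _)
    have h3 : ∏ j, |WW (x j) f| ≤ ∏ j ∈ T.image ι, |WW (x j) f| := by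
      calc ∏ j, |WW (x j) f|
          = (∏ j ∈ Finset.univ \ T.image ι, |WW (x j) f|) * ∏ j ∈ T.image ι, |WW (x j) f| :=
            hsplit.symm
        _ ≤ 1 * ∏ j ∈ T.image ι, |WW (x j) f| := mul_le_mul_of_nonneg_right h1 h2
        _ = ∏ j ∈ T.image ι, |WW (x j) f| := one_mul _
    have hinj : Set.InjOn ι ↑T := by
      intro z1 h1' z2 h2' h12
      rw [← hι z1 h1', ← hι z2 h2', h12]
    have h4 : ∏ j ∈ T.image ι, |WW (x j) f| = ∏ z ∈ T, |WW (x (ι z)) f| :=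
      Finset.prod_image (fun z1 h1' z2 h2' h12 => hinj h1' h2' h12)
    have h5 : ∏ z ∈ T, |WW (x (ι z)) f| = ∏ z ∈ T, |WW z f| :=
      Finset.prod_congr rfl (fun z hz => by rw [hι z hz])
    have h6 : ∏ z ∈ T, |WW z f| ≤ ∏ z ∈ T, (ind z f + pp F k) :=
      Finset.prod_le_prod (fun z _ => abs_nonneg _) (fun z _ => abs_WW_le _ _)
    calc ∏ j, |WW (x j) f| ≤ ∏ j ∈ T.image ι, |WW (x j) f| := h3
      _ = ∏ z ∈ T, |WW z f| := h4.trans h5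
      _ ≤ ∏ z ∈ T, (ind z f + pp F k) := h6
  have hqne : (Fintype.card F : ℝ) ≠ 0 := by
    have := hq1 (F := F); linarith
  have hcount : ∀ T' ∈ T.powerset,
      ∑ f : Om F k d, ∏ z ∈ T', ind z f
        = (Fintype.card (Om F k d) : ℝ) * pp F k ^ T'.card := by
    intro T' hT'
    have hT'T : T' ⊆ T := Finset.mem_powerset.1 hT'
    have hsum : ∑ f : Om F k d, ∏ z ∈ T', ind z f
        = ((Finset.univ.filter
            (fun f : Om F k d => ∀ i, ∀ z ∈ T', evV z (f i) = 0)).card : ℝ) := by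
      have : ∀ f : Om F k d, ∏ z ∈ T', ind z f
          = if ∀ i, ∀ z ∈ T', evV z (f i) = 0 then (1:ℝ) else 0 := by
        intro f
        unfold ind
        rw [Finset.prod_boole]
        congr 1
        simp only [eq_iff_iff]
        constructor
        · intro h i z hz
          exact h z hz i
        · intro h z hz i
          exact h i z hz
      rw [Finset.sum_congr rfl (fun f _ => this f), Finset.sum_boole]
    rw [hsum]
    have hid := card_vanish_om L hL T' (hT'T.trans hTL)
    have hidR : ((Finset.univ.filter
          (fun f : Om F k d => ∀ i, ∀ z ∈ T', evV z (f i) = 0)).card : ℝ)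
        * ((Fintype.card F : ℝ) ^ (k * T'.card)) = (Fintype.card (Om F k d) : ℝ) := by
      exact_mod_cast congrArg (Nat.cast : ℕ → ℝ) hid
    have hppow : pp F k ^ T'.card = ((Fintype.card F : ℝ) ^ (k * T'.card))⁻¹ := by
      unfold pp
      rw [← inv_pow, ← pow_mul]
    rw [hppow]
    rw [eq_comm, mul_inv_eq_iff_eq_mul₀ (by positivity)]
    linarith [hidR]
  calc |∑ f : Om F k d, ∏ j, WW (x j) f|
      ≤ ∑ f : Om F k d, |∏ j, WW (x j) f| := Finset.abs_sum_le_sum_abs _ _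
    _ = ∑ f : Om F k d, ∏ j, |WW (x j) f| := by
        refine Finset.sum_congr rfl fun f _ => ?_
        rw [Finset.abs_prod]
    _ ≤ ∑ f : Om F k d, ∏ z ∈ T, (ind z f + pp F k) :=
        Finset.sum_le_sum (fun f _ => hpt f)
    _ = ∑ f : Om F k d, ∑ T' ∈ T.powerset, (∏ z ∈ T', ind z f) * ∏ z ∈ T \ T', pp F k := by
        refine Finset.sum_congr rfl fun f _ => ?_
        rw [Finset.prod_add]
    _ = ∑ T' ∈ T.powerset, ∑ f : Om F k d, (∏ z ∈ T', ind z f) * ∏ z ∈ T \ T', pp F k :=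
        Finset.sum_comm
    _ = ∑ T' ∈ T.powerset, (Fintype.card (Om F k d) : ℝ) * pp F k ^ T.card := by
        refine Finset.sum_congr rfl fun T' hT' => ?_
        have hT'T : T' ⊆ T := Finset.mem_powerset.1 hT'
        rw [Finset.prod_const, ← Finset.sum_mul, hcount T' hT']
        rw [Finset.card_sdiff_of_subset hT'T, mul_assoc, ← pow_add]
        congr 2
        have := Finset.card_le_card hT'T
        omega
    _ = (2:ℝ) ^ T.card * ((Fintype.card (Om F k d) : ℝ) * pp F k ^ T.card) := by
        rw [Finset.sum_const, Finset.card_powerset, nsmul_eq_mul]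
        norm_num
    _ = (Fintype.card (Om F k d) : ℝ) * (2 * pp F k) ^ T.card := by
        rw [mul_pow]
        ring

/-- `x` has a heavy line : some line containing at least `d+2` of its points. -/
def HasHeavy (dd : ℕ) {t : ℕ} (x : Fin t → (Fin (k + 1) → F)) : Prop :=
  ∃ P Q : Fin (k + 1) → F, P ≠ Q ∧
    dd + 2 ≤ ((Finset.univ.image x).filter (· ∈ lineF P Q)).card

noncomputable def heavyF (dd : ℕ) {t : ℕ} (x : Fin t → (Fin (k + 1) → F)) :
    Finset (Fin (k + 1) → F) :=
  @dite _ (HasHeavy dd x) (Classical.dec _)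
    (fun h => lineF h.choose h.choose_spec.choose) (fun _ => ∅)

lemma heavyF_spec {dd t : ℕ} {x : Fin t → (Fin (k + 1) → F)} (h : HasHeavy dd x) :
    ∃ P Q : Fin (k + 1) → F, P ≠ Q ∧ heavyF dd x = lineF P Q ∧
      dd + 2 ≤ ((Finset.univ.image x).filter (· ∈ heavyF dd x)).card := by
  refine ⟨h.choose, h.choose_spec.choose, h.choose_spec.choose_spec.1, ?_, ?_⟩
  · unfold heavyF
    rw [dif_pos h]
  · have : heavyF dd x = lineF h.choose h.choose_spec.choose := by
      unfold heavyF
      rw [dif_pos h]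
    rw [this]
    exact h.choose_spec.choose_spec.2

lemma heavy_unique {dd t : ℕ} {x : Fin t → (Fin (k + 1) → F)}
    (hcard : (Finset.univ.image x).card ≤ 2 * dd - 2)
    {P Q : Fin (k + 1) → F} (hPQ : P ≠ Q)
    (hline : dd + 2 ≤ ((Finset.univ.image x).filter (· ∈ lineF P Q)).card)
    (h : HasHeavy dd x) : lineF P Q = heavyF dd x := by
  obtain ⟨P', Q', hPQ', heq, hcard'⟩ := heavyF_spec h
  rw [heq] at hcard' ⊢
  by_contra hne
  have hint : (lineF P Q ∩ lineF P' Q').card ≤ 1 := lineF_inter_card hPQ hPQ' hne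
  have h2 := Finset.card_union_add_card_inter
    ((Finset.univ.image x).filter (· ∈ lineF P Q))
    ((Finset.univ.image x).filter (· ∈ lineF P' Q'))
  have h3 : (((Finset.univ.image x).filter (· ∈ lineF P Q)) ∩
      ((Finset.univ.image x).filter (· ∈ lineF P' Q'))).card ≤ 1 := by
    refine le_trans (Finset.card_le_card ?_) hint
    intro w hw
    obtain ⟨hw1, hw2⟩ := Finset.mem_inter.1 hw
    exact Finset.mem_inter.2 ⟨(Finset.mem_filter.1 hw1).2, (Finset.mem_filter.1 hw2).2⟩
  have h4 : (((Finset.univ.image x).filter (· ∈ lineF P Q)) ∪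
      ((Finset.univ.image x).filter (· ∈ lineF P' Q'))).card ≤ (Finset.univ.image x).card := by
    refine Finset.card_le_card ?_
    refine Finset.union_subset (Finset.filter_subset _ _) (Finset.filter_subset _ _)
  omega

/-- if a tuple has a point occurring exactly once and the corresponding term is nonzero,
then it has a heavy line containing that point. -/
lemma exists_heavy_of_singleton {t : ℕ} {x : Fin t → (Fin (k + 1) → F)} (j₀ : Fin t)
    (hs : ∀ j, x j = x j₀ → j = j₀)
    (hterm : ∑ f : Om F k d, ∏ j, WW (x j) f ≠ 0)
    (himg : (Finset.univ.image x).card ≤ 2 * d - 2) :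
    HasHeavy d x ∧ x j₀ ∈ heavyF d x := by
  have hnotsep : ¬ Sep d ((Finset.univ.image x).erase (x j₀)) (x j₀) := fun hsep =>
    hterm (term_zero x j₀ hs hsep)
  have hzA : x j₀ ∉ (Finset.univ.image x).erase (x j₀) := Finset.notMem_erase _ _
  have hA : ((Finset.univ.image x).erase (x j₀)).card ≤ 2 * d :=
    le_trans (Finset.card_le_card (Finset.erase_subset _ _)) (by omega)
  obtain ⟨a, haA, hbig⟩ := heavy_line_of_not_sep hzA hA hnotsep
  have hax : x j₀ ≠ a := (Finset.mem_erase.1 haA).1.symm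
  have hsubfil : insert (x j₀) (((Finset.univ.image x).erase (x j₀)).filter
      (· ∈ lineF (x j₀) a)) ⊆ (Finset.univ.image x).filter (· ∈ lineF (x j₀) a) := by
    intro w hw
    rcases Finset.mem_insert.1 hw with rfl | hw
    · exact Finset.mem_filter.2 ⟨Finset.mem_image.2 ⟨j₀, Finset.mem_univ _, rfl⟩,
        left_mem_lineF _ _⟩
    · obtain ⟨hwA, hwl⟩ := Finset.mem_filter.1 hw
      exact Finset.mem_filter.2 ⟨Finset.mem_of_mem_erase hwA, hwl⟩
  have hnotin : x j₀ ∉ ((Finset.univ.image x).erase (x j₀)).filter (· ∈ lineF (x j₀) a) :=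
    fun h => hzA (Finset.mem_filter.1 h).1
  have hins : d + 2 ≤ ((Finset.univ.image x).filter (· ∈ lineF (x j₀) a)).card := by
    have := Finset.card_le_card hsubfil
    rw [Finset.card_insert_of_notMem hnotin] at this
    omega
  have hH : HasHeavy d x := ⟨x j₀, a, hax, hins⟩
  refine ⟨hH, ?_⟩
  rw [← heavy_unique himg hax hins hH]
  exact left_mem_lineF _ _

section Fiber

/-- bound for the sum over one fiber of the classifier. -/
lemma fiber_bound (hk : 1 ≤ k) (hd5 : 5 ≤ d)
    (c : Fin (2*d-2) → Fin (2*d-2)) (b : Fin (2*d-2) → Bool) :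
    ∑ x ∈ Finset.univ.filter (fun x : Fin (2*d-2) → (Fin (k+1) → F) =>
        (shape x, fun j => decide (x j ∈ heavyF d x)) = (c, b)),
      |∑ f : Om F k d, ∏ j, WW (x j) f|
    ≤ (2:ℝ)^(2*(2*d-2)) * (Fintype.card F : ℝ)^(d-1) * (Fintype.card (Om F k d) : ℝ) := by
  classical
  have hq0 : (0:ℝ) < (Fintype.card F : ℝ) := by
    have := hq1 (F := F); linarith
  have hOm0 : (0:ℝ) ≤ (Fintype.card (Om F k d) : ℝ) := by positivity
  set q : ℝ := (Fintype.card F : ℝ) with hqdef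
  set Fi := Finset.univ.filter (fun x : Fin (2*d-2) → (Fin (k+1) → F) =>
      (shape x, fun j => decide (x j ∈ heavyF d x)) = (c, b)) with hFidef
  set Fi' := Fi.filter (fun x => |∑ f : Om F k d, ∏ j, WW (x j) f| ≠ 0) with hFi'def
  have hstep : ∑ x ∈ Fi, |∑ f : Om F k d, ∏ j, WW (x j) f|
      = ∑ x ∈ Fi', |∑ f : Om F k d, ∏ j, WW (x j) f| :=
    (Finset.sum_filter_ne_zero Fi).symm
  rw [hstep]
  rcases Fi'.eq_empty_or_nonempty with hemp | ⟨x₀, hx₀⟩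
  · rw [hemp]
    simp only [Finset.sum_empty]
    positivity
  -- facts valid for every x ∈ Fi'
  have hxc : ∀ x ∈ Fi', shape x = c ∧ (fun j => decide (x j ∈ heavyF d x)) = b ∧
      |∑ f : Om F k d, ∏ j, WW (x j) f| ≠ 0 := by
    intro x hx
    obtain ⟨hx1, hx2⟩ := Finset.mem_filter.1 hx
    obtain ⟨-, hx3⟩ := Finset.mem_filter.1 hx1
    rw [Prod.mk.injEq] at hx3
    exact ⟨hx3.1, hx3.2, hx2⟩
  have hcsh : c = shape x₀ := ((hxc x₀ hx₀).1).symm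
  have hc_idem : ∀ j, c (c j) = c j := by
    intro j
    rw [hcsh]
    exact shape_idem x₀ j
  set R := Finset.univ.filter (fun j : Fin (2*d-2) => c j = j) with hRdef
  have hcR : ∀ j, c j ∈ R := fun j => Finset.mem_filter.2 ⟨Finset.mem_univ _, hc_idem j⟩
  have hval : ∀ x ∈ Fi', ∀ j, x (c j) = x j := by
    intro x hx j
    rw [← (hxc x hx).1]
    exact shape_spec x j
  have hinjR : ∀ x ∈ Fi', Set.InjOn x ↑R := by
    intro x hx j hj j' hj' hxx
    have h1 : shape x j = shape x j' := shape_eq_of_eq x hxx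
    rw [(hxc x hx).1] at h1
    rw [← (Finset.mem_filter.1 hj).2, ← (Finset.mem_filter.1 hj').2]
    exact h1
  have himgR : ∀ x ∈ Fi', Finset.univ.image x = R.image x := by
    intro x hx
    ext w
    simp only [Finset.mem_image]
    constructor
    · rintro ⟨j, -, rfl⟩
      exact ⟨c j, hcR j, hval x hx j⟩
    · rintro ⟨j, -, rfl⟩
      exact ⟨j, Finset.mem_univ _, rfl⟩
  have hcardimg : ∀ x ∈ Fi', (Finset.univ.image x).card = R.card := by
    intro x hx
    rw [himgR x hx]
    exact Finset.card_image_of_injOn (hinjR x hx)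
  -- block partition
  have hbiun : R.biUnion (fun j => Finset.univ.filter (fun j' => c j' = j)) = Finset.univ := by
    ext j'
    simp only [Finset.mem_biUnion, Finset.mem_univ, iff_true]
    exact ⟨c j', hcR j', Finset.mem_filter.2 ⟨Finset.mem_univ _, rfl⟩⟩
  have hdisjb : ∀ j1 ∈ R, ∀ j2 ∈ R, j1 ≠ j2 →
      Disjoint (Finset.univ.filter (fun j' => c j' = j1))
        (Finset.univ.filter (fun j' => c j' = j2)) := by
    intro j1 _ j2 _ hne
    rw [Finset.disjoint_left]
    intro w hw1 hw2
    exact hne ((Finset.mem_filter.1 hw1).2 ▸ (Finset.mem_filter.1 hw2).2.symm ▸ rfl)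
  have hpart : ∑ j ∈ R, (Finset.univ.filter (fun j' => c j' = j)).card = 2*d-2 := by
    rw [← Finset.card_biUnion hdisjb, hbiun, Finset.card_univ, Fintype.card_fin]
  have htt0 : 0 < 2*d-2 := by omega
  -- common final-step helper
  have hfinal : ∀ (s : ℕ) (Cnt : ℕ), (Fi'.card ≤ Cnt) →
      (∀ x ∈ Fi', |∑ f : Om F k d, ∏ j, WW (x j) f|
        ≤ (Fintype.card (Om F k d) : ℝ) * (2 * pp F k) ^ s) →
      ((Cnt : ℝ) * (pp F k) ^ s ≤ q ^ (d-1)) → (s ≤ 2*(2*d-2)) →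
      ∑ x ∈ Fi', |∑ f : Om F k d, ∏ j, WW (x j) f|
        ≤ (2:ℝ)^(2*(2*d-2)) * q^(d-1) * (Fintype.card (Om F k d) : ℝ) := by
    intro s Cnt hCnt hterm hexp hs2
    have hppnn : (0:ℝ) ≤ pp F k := pp_nonneg
    calc ∑ x ∈ Fi', |∑ f : Om F k d, ∏ j, WW (x j) f|
        ≤ ∑ _x ∈ Fi', (Fintype.card (Om F k d) : ℝ) * (2 * pp F k) ^ s :=
          Finset.sum_le_sum hterm
      _ = (Fi'.card : ℝ) * ((Fintype.card (Om F k d) : ℝ) * (2 * pp F k) ^ s) := by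
          rw [Finset.sum_const, nsmul_eq_mul]
      _ ≤ (Cnt : ℝ) * ((Fintype.card (Om F k d) : ℝ) * (2 * pp F k) ^ s) := by
          refine mul_le_mul_of_nonneg_right ?_ (by positivity)
          exact_mod_cast hCnt
      _ = (2:ℝ)^s * ((Cnt : ℝ) * (pp F k) ^ s) * (Fintype.card (Om F k d) : ℝ) := by
          rw [mul_pow]; ring
      _ ≤ (2:ℝ)^(2*(2*d-2)) * q^(d-1) * (Fintype.card (Om F k d) : ℝ) := by
          refine mul_le_mul_of_nonneg_right ?_ hOm0
          refine mul_le_mul ?_ hexp (by positivity) (by positivity)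
          exact pow_le_pow_right₀ (by norm_num) hs2
  by_cases hsing : ∃ j₀ ∈ R, Finset.univ.filter (fun j' => c j' = j₀) = {j₀}
  · -- case B : singleton exists
    obtain ⟨j₀, hj₀R, hj₀sing⟩ := hsing
    have hsingx : ∀ x ∈ Fi', ∀ jS ∈ R, Finset.univ.filter (fun j' => c j' = jS) = {jS} →
        ∀ j, x j = x jS → j = jS := by
      intro x hx jS hjSR hjSsing j hxj
      have h1 : shape x j = shape x jS := shape_eq_of_eq x hxj
      rw [(hxc x hx).1] at h1
      have h2 : c j = jS := by rw [h1, (Finset.mem_filter.1 hjSR).2]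
      have h3 : j ∈ Finset.univ.filter (fun j' => c j' = jS) :=
        Finset.mem_filter.2 ⟨Finset.mem_univ _, h2⟩
      rw [hjSsing] at h3
      exact Finset.mem_singleton.1 h3
    have himgcard : ∀ x ∈ Fi', (Finset.univ.image x).card ≤ 2*d-2 := by
      intro x hx
      rw [hcardimg x hx]
      calc R.card ≤ Fintype.card (Fin (2*d-2)) := Finset.card_le_univ R
        _ = 2*d-2 := Fintype.card_fin _
    have hheavy : ∀ x ∈ Fi', HasHeavy d x ∧ x j₀ ∈ heavyF d x := by
      intro x hx
      exact exists_heavy_of_singleton j₀ (hsingx x hx j₀ hj₀R hj₀sing)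
        (fun h0 => (hxc x hx).2.2 (by rw [h0, abs_zero])) (himgcard x hx)
    have hbx : ∀ x ∈ Fi', ∀ j, x j ∈ heavyF d x ↔ b j = true := by
      intro x hx j
      have h1 := congrFun (hxc x hx).2.1 j
      rw [← h1, decide_eq_true_eq]
    set Ron := R.filter (fun j => b j = true) with hRonDef
    set Roff := R.filter (fun j => ¬ (b j = true)) with hRoffDef
    have hRonR : Ron ⊆ R := Finset.filter_subset _ _
    have hRoffR : Roff ⊆ R := Finset.filter_subset _ _
    have hfilimg : ∀ x ∈ Fi', (Finset.univ.image x).filter (· ∈ heavyF d x) = Ron.image x := by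
      intro x hx
      ext w
      simp only [Finset.mem_filter, Finset.mem_image]
      constructor
      · rintro ⟨⟨j, -, rfl⟩, hw2⟩
        refine ⟨c j, ?_, hval x hx j⟩
        refine Finset.mem_filter.2 ⟨hcR j, ?_⟩
        rw [← hbx x hx (c j), hval x hx j]
        exact hw2
      · rintro ⟨j, hj, rfl⟩
        obtain ⟨hjR, hjb⟩ := Finset.mem_filter.1 hj
        exact ⟨⟨j, Finset.mem_univ _, rfl⟩, (hbx x hx j).2 hjb⟩
    have hoffn : ∀ x ∈ Fi', ∀ j ∈ Roff, x j ∉ heavyF d x := by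
      intro x hx j hj
      obtain ⟨hjR, hjb⟩ := Finset.mem_filter.1 hj
      rw [hbx x hx j]
      exact hjb
    have ha'big : d + 2 ≤ Ron.card := by
      obtain ⟨hH, -⟩ := hheavy x₀ hx₀
      obtain ⟨P, Q, hPQ, heqq, hhc⟩ := heavyF_spec hH
      calc d + 2 ≤ ((Finset.univ.image x₀).filter (· ∈ heavyF d x₀)).card := hhc
        _ = (Ron.image x₀).card := by rw [hfilimg x₀ hx₀]
        _ ≤ Ron.card := Finset.card_image_le
    have hblock2' : ∀ j ∈ Roff, 2 ≤ (Finset.univ.filter (fun j' => c j' = j)).card := by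
      intro j hj
      obtain ⟨hjR, hjb⟩ := Finset.mem_filter.1 hj
      have h1 : j ∈ Finset.univ.filter (fun j' => c j' = j) :=
        Finset.mem_filter.2 ⟨Finset.mem_univ _, (Finset.mem_filter.1 hjR).2⟩
      by_contra hcon
      push_neg at hcon
      have hpos : 1 ≤ (Finset.univ.filter (fun j' => c j' = j)).card :=
        Finset.card_pos.2 ⟨j, h1⟩
      have hone : (Finset.univ.filter (fun j' => c j' = j)).card = 1 := by omega
      obtain ⟨a, ha⟩ := Finset.card_eq_one.1 hone
      have hja : j = a := Finset.mem_singleton.1 (ha ▸ h1)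
      have hsg : Finset.univ.filter (fun j' => c j' = j) = {j} := by rw [ha, ← hja]
      have hhv := exists_heavy_of_singleton j (hsingx x₀ hx₀ j hjR hsg)
        (fun h0 => (hxc x₀ hx₀).2.2 (by rw [h0, abs_zero])) (himgcard x₀ hx₀)
      exact hjb ((hbx x₀ hx₀ j).1 hhv.2)
    have hsum2 : Ron.card + 2 * Roff.card ≤ 2*d-2 := by
      have hdsj : Disjoint Ron Roff := Finset.disjoint_filter_filter_not R R _
      have hun : Ron ∪ Roff = R := Finset.filter_union_filter_not_eq _ R
      have hsplitsum : (∑ j ∈ Ron, (Finset.univ.filter (fun j' => c j' = j)).card)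
          + ∑ j ∈ Roff, (Finset.univ.filter (fun j' => c j' = j)).card = 2*d-2 := by
        rw [← Finset.sum_union hdsj, hun]
        exact hpart
      have h1 : Ron.card ≤ ∑ j ∈ Ron, (Finset.univ.filter (fun j' => c j' = j)).card := by
        calc Ron.card = ∑ _j ∈ Ron, 1 := by rw [Finset.sum_const, smul_eq_mul, mul_one]
          _ ≤ ∑ j ∈ Ron, (Finset.univ.filter (fun j' => c j' = j)).card := by
              refine Finset.sum_le_sum fun j hj => ?_
              exact Finset.card_pos.2 ⟨j, Finset.mem_filter.2 ⟨Finset.mem_univ _,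
                (Finset.mem_filter.1 (hRonR hj)).2⟩⟩
      have h2 : 2 * Roff.card ≤ ∑ j ∈ Roff, (Finset.univ.filter (fun j' => c j' = j)).card := by
        calc 2 * Roff.card = ∑ _j ∈ Roff, 2 := by rw [Finset.sum_const, smul_eq_mul, mul_comm]
          _ ≤ _ := Finset.sum_le_sum hblock2'
      omega
    have hule : Roff.card ≤ d := by omega
    obtain ⟨S₁, hS₁sub, hS₁card⟩ := Finset.exists_subset_card_eq
      (show d+1 ≤ Ron.card by omega)
    have hterm : ∀ x ∈ Fi', |∑ f : Om F k d, ∏ j, WW (x j) f|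
        ≤ (Fintype.card (Om F k d) : ℝ) * (2 * pp F k) ^ (Roff.card + (d+1)) := by
      intro x hx
      obtain ⟨hH, hj₀h⟩ := hheavy x hx
      obtain ⟨P, Q, hPQ, heqq, -⟩ := heavyF_spec hH
      have hS₁heavy : ∀ w ∈ S₁.image x, w ∈ heavyF d x := by
        intro w hw
        obtain ⟨j, hj, rfl⟩ := Finset.mem_image.1 hw
        exact (hbx x hx j).2 (Finset.mem_filter.1 (hS₁sub hj)).2
      have hdisjT : Disjoint (Roff.image x) (S₁.image x) := by
        rw [Finset.disjoint_left]
        intro w hw1 hw2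
        obtain ⟨j, hj, rfl⟩ := Finset.mem_image.1 hw1
        exact hoffn x hx j hj (hS₁heavy _ hw2)
      have hinjRoff : (Roff.image x).card = Roff.card :=
        Finset.card_image_of_injOn ((hinjR x hx).mono (Finset.coe_subset.2 hRoffR))
      have hinjS₁ : (S₁.image x).card = d + 1 := by
        rw [Finset.card_image_of_injOn
          ((hinjR x hx).mono (Finset.coe_subset.2 (hS₁sub.trans hRonR))), hS₁card]
      have hTcard : ((Roff.image x) ∪ (S₁.image x)).card = Roff.card + (d+1) := by
        rw [Finset.card_union_of_disjoint hdisjT, hinjRoff, hinjS₁]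
      have hTsub : (Roff.image x) ∪ (S₁.image x) ⊆ Finset.univ.image x :=
        Finset.union_subset (Finset.image_subset_image (Finset.subset_univ _))
          (Finset.image_subset_image (Finset.subset_univ _))
      have hLfin : ((Roff.image x).toList ++ (S₁.image x).toList).toFinset
          = (Roff.image x) ∪ (S₁.image x) := by
        rw [List.toFinset_append, Finset.toList_toFinset, Finset.toList_toFinset]
      have hLnd : ((Roff.image x).toList ++ (S₁.image x).toList).Nodup := by
        refine List.Nodup.append (Finset.nodup_toList _) (Finset.nodup_toList _) ?_
        intro a ha1 ha2
        rw [Finset.mem_toList] at ha1 ha2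
        exact (Finset.disjoint_left.1 hdisjT) ha1 ha2
      have hLseq : SeqSep d ((Roff.image x).toList ++ (S₁.image x).toList) := by
        refine seqSep_append _ _ (seqSep_of_short (dd := d) _ (Finset.nodup_toList _)
          (by rw [Finset.length_toList, hinjS₁])) hLnd ?_
        intro z hz
        rw [Finset.mem_toList] at hz
        obtain ⟨j, hj, rfl⟩ := Finset.mem_image.1 hz
        have hzheavy : x j ∉ heavyF d x := hoffn x hx j hj
        have hzline : x j ∉ lineF P Q := by rw [← heqq]; exact hzheavy
        obtain ⟨g, hdg, hvg, hzg⟩ := exists_line_form hPQ hzline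
        have hsep1 : Sep 1 (S₁.image x) (x j) :=
          ⟨g, hdg, fun y hy => hvg y (heqq ▸ hS₁heavy y hy), hzg⟩
        have hsep2 : Sep (d-1) ((Roff.image x).erase (x j)) (x j) := by
          refine sep_of_card_le (Finset.notMem_erase _ _) ?_
          rw [Finset.card_erase_of_mem (Finset.mem_image_of_mem x hj), hinjRoff]
          omega
        have hsep3 := hsep1.union hsep2
        have h1d : 1 + (d-1) = d := by omega
        rw [h1d] at hsep3
        refine hsep3.anti ?_
        intro y hy
        rw [hLfin] at hy
        obtain ⟨hyz, hyT⟩ := Finset.mem_erase.1 hy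
        rcases Finset.mem_union.1 hyT with hyo | hys
        · exact Finset.mem_union_right _ (Finset.mem_erase.2 ⟨hyz, hyo⟩)
        · exact Finset.mem_union_left _ hys
      have h := abs_term_le htt0 x ((Roff.image x) ∪ (S₁.image x)) hTsub _ hLseq
        (by rw [hLfin])
      rwa [hTcard] at h
    -- counting
    have hRonne : Ron.Nonempty := Finset.card_pos.1 (by omega)
    set j₁ := Ron.min' hRonne with hj₁def
    have hj₁Ron : j₁ ∈ Ron := Finset.min'_mem _ _
    have hRe1ne : (Ron.erase j₁).Nonempty := Finset.card_pos.1
      (by rw [Finset.card_erase_of_mem hj₁Ron]; omega)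
    set j₂ := (Ron.erase j₁).min' hRe1ne with hj₂def
    have hj₂mem : j₂ ∈ Ron.erase j₁ := Finset.min'_mem _ _
    obtain ⟨hj₂ne, hj₂Ron⟩ := Finset.mem_erase.1 hj₂mem
    set S₂ := (Ron.erase j₁).erase j₂ with hS₂def
    have hS₂card : S₂.card = Ron.card - 2 := by
      rw [hS₂def, Finset.card_erase_of_mem hj₂mem, Finset.card_erase_of_mem hj₁Ron]
      omega
    have hlineid : ∀ x ∈ Fi', heavyF d x = lineF (x j₁) (x j₂) := by
      intro x hx
      obtain ⟨hH, -⟩ := hheavy x hx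
      obtain ⟨P, Q, hPQ, heqq, -⟩ := heavyF_spec hH
      have hm1 : x j₁ ∈ lineF P Q := by
        rw [← heqq]
        exact (hbx x hx j₁).2 (Finset.mem_filter.1 hj₁Ron).2
      have hm2 : x j₂ ∈ lineF P Q := by
        rw [← heqq]
        exact (hbx x hx j₂).2 (Finset.mem_filter.1 hj₂Ron).2
      have hne12 : x j₁ ≠ x j₂ := by
        intro hE
        exact hj₂ne ((hinjR x hx) (Finset.mem_coe.2 (hRonR hj₁Ron))
          (Finset.mem_coe.2 (hRonR hj₂Ron)) hE).symm
      rw [heqq, ← lineF_eq hPQ hm1 hm2 hne12]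
    have hparam : ∀ x, ∀ j, x ∈ Fi' → j ∈ S₂ → ∃ e : F, x j = x j₁ + e • (x j₂ - x j₁) := by
      intro x j hx hj
      have hjRon : j ∈ Ron := Finset.mem_of_mem_erase (Finset.mem_of_mem_erase hj)
      have hxh : x j ∈ heavyF d x := (hbx x hx j).2 (Finset.mem_filter.1 hjRon).2
      rw [hlineid x hx] at hxh
      exact mem_lineF.1 hxh
    choose ε hε using hparam
    have hcount : Fi'.card ≤ Fintype.card ((Fin (k+1) → F) × (Fin (k+1) → F) ×
        (↥S₂ → F) × (↥Roff → (Fin (k+1) → F))) := by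
      rw [← Finset.card_univ]
      refine Finset.card_le_card_of_injOn (fun x => (x j₁, x j₂,
        fun j : ↥S₂ => if hx : x ∈ Fi' then ε x j hx j.2 else 0,
        fun j : ↥Roff => x j)) (fun _ _ => Finset.mem_univ _) ?_
      intro x hx x' hx' heqq
      simp only [Prod.mk.injEq] at heqq
      obtain ⟨h1, h2, h3, h4⟩ := heqq
      rw [Finset.mem_coe] at hx hx'
      funext j
      rw [← hval x hx j, ← hval x' hx' j]
      have hcjR : c j ∈ R := hcR j
      by_cases hcase : c j ∈ Ron
      · by_cases hc1 : c j = j₁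
        · rw [hc1, h1]
        by_cases hc2 : c j = j₂
        · rw [hc2, h2]
        · have hjS₂ : c j ∈ S₂ := Finset.mem_erase.2 ⟨hc2, Finset.mem_erase.2 ⟨hc1, hcase⟩⟩
          have e1 := hε x (c j) hx hjS₂
          have e2 := hε x' (c j) hx' hjS₂
          have e3 : ε x (c j) hx hjS₂ = ε x' (c j) hx' hjS₂ := by
            have h5 := congrFun h3 ⟨c j, hjS₂⟩
            simpa [dif_pos hx, dif_pos hx'] using h5
          rw [e1, e2, e3, h1, h2]
      · have hcoff : c j ∈ Roff :=
          Finset.mem_filter.2 ⟨hcjR, fun hb => hcase (Finset.mem_filter.2 ⟨hcjR, hb⟩)⟩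
        exact congrFun h4 ⟨c j, hcoff⟩
    refine hfinal (Roff.card + (d+1)) (Fintype.card ((Fin (k+1) → F) × (Fin (k+1) → F) ×
        (↥S₂ → F) × (↥Roff → (Fin (k+1) → F)))) hcount hterm ?_ (by omega)
    have hcardN : (Fintype.card ((Fin (k+1) → F) × (Fin (k+1) → F) ×
        (↥S₂ → F) × (↥Roff → (Fin (k+1) → F))) : ℝ)
        = q ^ ((k+1) + ((k+1) + (S₂.card + (k+1) * Roff.card))) := by
      rw [Fintype.card_prod, Fintype.card_prod, Fintype.card_prod]
      simp only [Fintype.card_fun, Fintype.card_coe, Fintype.card_fin]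
      push_cast
      ring
    rw [hcardN]
    have hppval : pp F k ^ (Roff.card + (d+1)) = (q ^ (k * (Roff.card + (d+1))))⁻¹ := by
      unfold pp
      rw [← inv_pow, ← pow_mul]
    rw [hppval]
    have hqpow : (0:ℝ) < q ^ (k * (Roff.card + (d+1))) := by positivity
    rw [mul_inv_le_iff₀ hqpow, ← pow_add]
    refine pow_le_pow_right₀ hq1 ?_
    -- the numeric inequality
    have hkd : k + d - 1 ≤ k * d := by
      obtain ⟨m, rfl⟩ := Nat.exists_eq_add_of_le hk
      have h1 : m ≤ m * d := Nat.le_mul_of_pos_right m (by omega)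
      have h2 : (1+m)*d = d + m*d := by ring
      omega
    have hkr : k * (Roff.card + (d+1)) = k * Roff.card + k * d + k := by ring
    have hkr2 : (k+1) * Roff.card = k * Roff.card + Roff.card := by ring
    rw [hS₂card, hkr, hkr2]
    set A := k * Roff.card with hA
    set B := k * d with hB
    omega
  · -- case A : all blocks have ≥ 2 elements
    have hblock2 : ∀ j ∈ R, 2 ≤ (Finset.univ.filter (fun j' => c j' = j)).card := by
      intro j hj
      have h1 : j ∈ Finset.univ.filter (fun j' => c j' = j) :=
        Finset.mem_filter.2 ⟨Finset.mem_univ _, (Finset.mem_filter.1 hj).2⟩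
      have hpos : 1 ≤ (Finset.univ.filter (fun j' => c j' = j)).card :=
        Finset.card_pos.2 ⟨j, h1⟩
      by_contra hcon
      push_neg at hcon
      have hone : (Finset.univ.filter (fun j' => c j' = j)).card = 1 := by omega
      obtain ⟨a, ha⟩ := Finset.card_eq_one.1 hone
      have : j = a := Finset.mem_singleton.1 (ha ▸ h1)
      exact hsing ⟨j, hj, by rw [ha, this]⟩
    have hscard : 2 * R.card ≤ 2*d-2 := by
      calc 2 * R.card = ∑ _j ∈ R, 2 := by rw [Finset.sum_const, smul_eq_mul, mul_comm]
        _ ≤ ∑ j ∈ R, (Finset.univ.filter (fun j' => c j' = j)).card :=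
            Finset.sum_le_sum hblock2
        _ = 2*d-2 := hpart
    have hsle : R.card ≤ d - 1 := by omega
    have hterm : ∀ x ∈ Fi', |∑ f : Om F k d, ∏ j, WW (x j) f|
        ≤ (Fintype.card (Om F k d) : ℝ) * (2 * pp F k) ^ R.card := by
      intro x hx
      have hTcard := hcardimg x hx
      have h := abs_term_le htt0 x (Finset.univ.image x) (by exact subset_rfl)
        ((Finset.univ.image x).toList)
        (seqSep_of_short (dd := d) _ (Finset.nodup_toList _)
          (by rw [Finset.length_toList, hTcard]; omega))
        (by rw [Finset.toList_toFinset])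
      rwa [hTcard] at h
    have hcount : Fi'.card ≤ (Fintype.card F ^ (k+1)) ^ R.card := by
      have hmaps : ∀ x ∈ Fi', (fun j : ↥R => x j) ∈ (Finset.univ :
          Finset (↥R → (Fin (k+1) → F))) := fun _ _ => Finset.mem_univ _
      have hinj : Set.InjOn (fun (x : Fin (2*d-2) → (Fin (k+1) → F)) =>
          (fun j : ↥R => x j)) ↑Fi' := by
        intro x hx x' hx' heq
        funext j
        have h1 : x (c j) = x' (c j) := congrFun heq ⟨c j, hcR j⟩
        rw [← hval x hx j, ← hval x' hx' j, h1]
      have := Finset.card_le_card_of_injOn _ hmaps hinj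
      calc Fi'.card ≤ Fintype.card (↥R → (Fin (k+1) → F)) := by
            rwa [Finset.card_univ] at this
        _ = (Fintype.card F ^ (k+1)) ^ R.card := by
            rw [Fintype.card_fun, Fintype.card_fun, Fintype.card_fin, Fintype.card_coe]
    refine hfinal R.card ((Fintype.card F ^ (k+1)) ^ R.card) hcount hterm ?_ (by omega)
    -- ((q^{k+1})^s : ℝ) * pp^s = q^s ≤ q^{d-1}
    have hppval : pp F k ^ R.card = (q ^ (k * R.card))⁻¹ := by
      unfold pp
      rw [← inv_pow, ← pow_mul]
    rw [hppval]
    push_cast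
    rw [← pow_mul]
    have hqpow : (0:ℝ) < q ^ (k * R.card) := by positivity
    rw [mul_inv_le_iff₀ hqpow, ← pow_add]
    refine pow_le_pow_right₀ hq1 ?_
    have : (k+1) * R.card = k * R.card + R.card := by ring
    omega

/-- the full moment bound. -/
lemma moment_bound (hk : 1 ≤ k) (hd5 : 5 ≤ d) :
    ∑ f : Om F k d, (∑ x : Fin (k+1) → F, WW x f) ^ (2*d-2)
      ≤ (Fintype.card ((Fin (2*d-2) → Fin (2*d-2)) × (Fin (2*d-2) → Bool)) : ℝ)
        * ((2:ℝ)^(2*(2*d-2)) * (Fintype.card F : ℝ)^(d-1)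
          * (Fintype.card (Om F k d) : ℝ)) := by
  classical
  have hexp : ∀ f : Om F k d, (∑ x : Fin (k+1) → F, WW x f) ^ (2*d-2)
      = ∑ xt : Fin (2*d-2) → (Fin (k+1) → F), ∏ j, WW (xt j) f := by
    intro f
    calc (∑ x : Fin (k+1) → F, WW x f) ^ (2*d-2)
        = ∏ _j : Fin (2*d-2), (∑ x : Fin (k+1) → F, WW x f) := by
          rw [Finset.prod_const, Finset.card_univ, Fintype.card_fin]
      _ = ∑ xt ∈ Fintype.piFinset (fun _ : Fin (2*d-2) => Finset.univ),
            ∏ j, WW (xt j) f := Finset.prod_univ_sum _ _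
      _ = ∑ xt : Fin (2*d-2) → (Fin (k+1) → F), ∏ j, WW (xt j) f := by
          rw [Fintype.piFinset_univ]
  calc ∑ f : Om F k d, (∑ x : Fin (k+1) → F, WW x f) ^ (2*d-2)
      = ∑ f : Om F k d, ∑ xt : Fin (2*d-2) → (Fin (k+1) → F), ∏ j, WW (xt j) f :=
        Finset.sum_congr rfl (fun f _ => hexp f)
    _ = ∑ xt : Fin (2*d-2) → (Fin (k+1) → F), ∑ f : Om F k d, ∏ j, WW (xt j) f :=
        Finset.sum_comm
    _ ≤ ∑ xt : Fin (2*d-2) → (Fin (k+1) → F), |∑ f : Om F k d, ∏ j, WW (xt j) f| :=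
        Finset.sum_le_sum (fun xt _ => le_abs_self _)
    _ = ∑ cb : (Fin (2*d-2) → Fin (2*d-2)) × (Fin (2*d-2) → Bool),
          ∑ xt ∈ Finset.univ.filter (fun xt : Fin (2*d-2) → (Fin (k+1) → F) =>
            (shape xt, fun j => decide (xt j ∈ heavyF d xt)) = cb),
            |∑ f : Om F k d, ∏ j, WW (xt j) f| := by
        rw [Finset.sum_fiberwise]
    _ ≤ ∑ _cb : (Fin (2*d-2) → Fin (2*d-2)) × (Fin (2*d-2) → Bool),
          ((2:ℝ)^(2*(2*d-2)) * (Fintype.card F : ℝ)^(d-1)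
            * (Fintype.card (Om F k d) : ℝ)) := by
        refine Finset.sum_le_sum (fun cb _ => ?_)
        have h := fiber_bound (F := F) (k := k) (d := d) hk hd5 cb.1 cb.2
        simpa only [Prod.mk.eta, mul_assoc] using h
    _ = (Fintype.card ((Fin (2*d-2) → Fin (2*d-2)) × (Fin (2*d-2) → Bool)) : ℝ)
        * ((2:ℝ)^(2*(2*d-2)) * (Fintype.card F : ℝ)^(d-1)
          * (Fintype.card (Om F k d) : ℝ)) := by
        rw [Finset.sum_const, Finset.card_univ, nsmul_eq_mul]

/-- the centred count identity : `∑ₓ W x f = Z f − q`. -/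
lemma sum_WW (f : Om F k d) :
    ∑ x : Fin (k+1) → F, WW x f
      = ((Finset.univ.filter (fun x : Fin (k+1) → F => ∀ i, evV x (f i) = 0)).card : ℝ)
        - (Fintype.card F : ℝ) := by
  have hqne : (Fintype.card F : ℝ) ≠ 0 := by
    have := hq1 (F := F); linarith
  unfold WW ind
  rw [Finset.sum_sub_distrib, Finset.sum_boole, Finset.sum_const, Finset.card_univ,
    nsmul_eq_mul]
  congr 1
  rw [Fintype.card_fun, Fintype.card_fin]
  unfold pp
  push_cast
  rw [inv_pow, pow_succ, mul_comm ((Fintype.card F : ℝ)^k) (Fintype.card F : ℝ),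
    mul_assoc, mul_inv_cancel₀ (pow_ne_zero _ hqne), mul_one]

end Fiber
end Prob
end S7


open S7

/-- Fix `k` and set `d = (k+1)² + 1`. There is a constant `C > 0`
(depending only on `k`) such that for every finite field `F` of order
`q = Fintype.card F > d(d−1)/2`: if `f₁, …, f_k` are chosen independently and uniformly at
random among polynomials in `k+1` variables of total degree at most `d`, and `Z` is the
number of common zeros in `F^(k+1)`, then `ℙ[Z < q/2] ≤ C·q^(1−d)`. Probabilities are
expressed as counts: the number of tuples realizing the event is at most `C·q^(1−d)` times
the total number of tuples. -/
theorem statement_7 (k : ℕ) (hk : 0 < k) (d : ℕ) (hd : d = (k + 1) ^ 2 + 1) :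
    ∃ C : ℝ, 0 < C ∧
      ∀ (F : Type) [Field F] [Fintype F],
        d * (d - 1) / 2 < Fintype.card F →
        (Nat.card {f : Fin k → MvPolynomial (Fin (k + 1)) F //
            (∀ i, (f i).totalDegree ≤ d) ∧
            (Nat.card {x : Fin (k + 1) → F //
                ∀ i, MvPolynomial.eval x (f i) = 0} : ℝ) <
              (Fintype.card F : ℝ) / 2} : ℝ) ≤
          C * (Fintype.card F : ℝ) ^ ((1 : ℤ) - (d : ℤ)) *
            Nat.card {f : Fin k → MvPolynomial (Fin (k + 1)) F //
              ∀ i, (f i).totalDegree ≤ d} := by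
  classical
  have hd5 : 5 ≤ d := by
    have h2 : 2 ≤ k + 1 := by omega
    have h4 : 4 ≤ (k+1)^2 := by nlinarith
    omega
  set Ncb : ℝ := (Fintype.card ((Fin (2*d-2) → Fin (2*d-2)) × (Fin (2*d-2) → Bool)) : ℝ)
    with hNcb
  have hNcb0 : 0 < Ncb := by
    rw [hNcb]
    have : Nonempty ((Fin (2*d-2) → Fin (2*d-2)) × (Fin (2*d-2) → Bool)) :=
      ⟨(fun j => j, fun _ => true)⟩
    exact_mod_cast Fintype.card_pos
  refine ⟨Ncb * 2^(2*(2*d-2)) * 2^(2*d-2), by positivity, ?_⟩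
  intro F _F1 _F2 hqbig
  letI : DecidableEq F := Classical.decEq F
  have hq1' : (1:ℝ) ≤ (Fintype.card F : ℝ) := by exact_mod_cast Fintype.card_pos
  have hqne : (Fintype.card F : ℝ) ≠ 0 := by linarith
  have hq0 : (0:ℝ) < (Fintype.card F : ℝ) := by linarith
  -- identify the total count
  have htot : (Nat.card {f : Fin k → MvPolynomial (Fin (k + 1)) F //
      ∀ i, (f i).totalDegree ≤ d} : ℝ) = (Fintype.card (Om F k d) : ℝ) := by
    congr 1
    have e1 : {f : Fin k → MvPolynomial (Fin (k + 1)) F // ∀ i, (f i).totalDegree ≤ d}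
        ≃ Om F k d :=
      (Equiv.subtypePiEquivPi (p := fun (_ : Fin k) (g : MvPolynomial (Fin (k+1)) F) =>
        g.totalDegree ≤ d)).trans
        (Equiv.piCongrRight (fun _i => Equiv.subtypeEquivRight
          (fun g => (MvPolynomial.mem_restrictTotalDegree _ _ g).symm)))
    rw [Nat.card_congr e1, Nat.card_eq_fintype_card]
  -- the Z function and the bad event
  have hNat : ∀ f : Om F k d,
      (Nat.card {x : Fin (k + 1) → F //
        ∀ i, MvPolynomial.eval x ((f i : MvPolynomial (Fin (k+1)) F)) = 0} : ℕ)
      = (Finset.univ.filter (fun x : Fin (k+1) → F => ∀ i, evV x (f i) = 0)).card := by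
    intro f
    rw [Nat.card_eq_fintype_card, Fintype.card_subtype]
    congr 1
  set Bad : Finset (Om F k d) := Finset.univ.filter (fun f =>
      ((Finset.univ.filter (fun x : Fin (k+1) → F => ∀ i, evV x (f i) = 0)).card : ℝ)
        < (Fintype.card F : ℝ)/2) with hBadDef
  have hbadcard : (Nat.card {f : Fin k → MvPolynomial (Fin (k + 1)) F //
      (∀ i, (f i).totalDegree ≤ d) ∧
      (Nat.card {x : Fin (k + 1) → F //
          ∀ i, MvPolynomial.eval x (f i) = 0} : ℝ) <
        (Fintype.card F : ℝ) / 2} : ℝ) = (Bad.card : ℝ) := by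
    congr 1
    have e2 : {f : Fin k → MvPolynomial (Fin (k + 1)) F //
        (∀ i, (f i).totalDegree ≤ d) ∧
        (Nat.card {x : Fin (k + 1) → F //
            ∀ i, MvPolynomial.eval x (f i) = 0} : ℝ) <
          (Fintype.card F : ℝ) / 2}
        ≃ {f : Om F k d //
            ((Finset.univ.filter (fun x : Fin (k+1) → F =>
              ∀ i, evV x (f i) = 0)).card : ℝ) < (Fintype.card F : ℝ)/2} := by
      refine ⟨fun f => ⟨fun i => ⟨f.1 i,
          (MvPolynomial.mem_restrictTotalDegree _ _ _).2 (f.2.1 i)⟩, ?_⟩,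
        fun g => ⟨fun i => (g.1 i : MvPolynomial (Fin (k+1)) F),
          ⟨fun i => (MvPolynomial.mem_restrictTotalDegree _ _ _).1 (g.1 i).2, ?_⟩⟩,
        fun f => ?_, fun g => ?_⟩
      · have h := f.2.2
        rw [← hNat (fun i => ⟨f.1 i,
          (MvPolynomial.mem_restrictTotalDegree _ _ _).2 (f.2.1 i)⟩)]
        exact h
      · have h := g.2
        rw [← hNat g.1] at h
        exact h
      · ext i : 2
        rfl
      · ext i : 2
        rfl
    rw [Nat.card_congr e2, Nat.card_eq_fintype_card, Fintype.card_subtype]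
  rw [hbadcard, htot]
  -- the moment chain
  have hbadsum : (Bad.card : ℝ) * ((Fintype.card F : ℝ)/2)^(2*d-2)
      ≤ ∑ f : Om F k d, (∑ x : Fin (k+1) → F, WW x f)^(2*d-2) := by
    have heven : Even (2*d-2) := ⟨d-1, by omega⟩
    calc (Bad.card : ℝ) * ((Fintype.card F : ℝ)/2)^(2*d-2)
        = ∑ _f ∈ Bad, ((Fintype.card F : ℝ)/2)^(2*d-2) := by
          rw [Finset.sum_const, nsmul_eq_mul]
      _ ≤ ∑ f ∈ Bad, (∑ x : Fin (k+1) → F, WW x f)^(2*d-2) := by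
          refine Finset.sum_le_sum fun f hf => ?_
          have hZf := (Finset.mem_filter.1 hf).2
          rw [sum_WW]
          have h1 : (Fintype.card F : ℝ)/2 ≤ (Fintype.card F : ℝ) -
              ((Finset.univ.filter (fun x : Fin (k+1) → F =>
                ∀ i, evV x (f i) = 0)).card : ℝ) := by
            linarith
          calc ((Fintype.card F : ℝ)/2)^(2*d-2)
              ≤ ((Fintype.card F : ℝ) - ((Finset.univ.filter
                  (fun x : Fin (k+1) → F => ∀ i, evV x (f i) = 0)).card : ℝ))^(2*d-2) := by
                refine pow_le_pow_left₀ (by linarith) h1 _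
            _ = (((Finset.univ.filter (fun x : Fin (k+1) → F =>
                  ∀ i, evV x (f i) = 0)).card : ℝ) - (Fintype.card F : ℝ))^(2*d-2) := by
                rw [show (((Finset.univ.filter (fun x : Fin (k+1) → F =>
                  ∀ i, evV x (f i) = 0)).card : ℝ) - (Fintype.card F : ℝ))
                  = -((Fintype.card F : ℝ) - ((Finset.univ.filter
                    (fun x : Fin (k+1) → F => ∀ i, evV x (f i) = 0)).card : ℝ)) by ring,
                  heven.neg_pow]
      _ ≤ ∑ f : Om F k d, (∑ x : Fin (k+1) → F, WW x f)^(2*d-2) := by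
          refine Finset.sum_le_sum_of_subset_of_nonneg (Finset.subset_univ _)
            (fun f _ _ => heven.pow_nonneg _)
  have hM := moment_bound (F := F) (k := k) (d := d) hk hd5
  have hchain : (Bad.card : ℝ) * ((Fintype.card F : ℝ)/2)^(2*d-2)
      ≤ Ncb * ((2:ℝ)^(2*(2*d-2)) * (Fintype.card F : ℝ)^(d-1)
        * (Fintype.card (Om F k d) : ℝ)) := hbadsum.trans hM
  have hhalf : (0:ℝ) < ((Fintype.card F : ℝ)/2)^(2*d-2) := by positivity
  refine le_of_mul_le_mul_right ?_ hhalf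
  refine hchain.trans (le_of_eq ?_)
  -- algebra : Ncb * (2^{2t} q^{d-1} cardOm) = C * q^{1-d} * cardOm * (q/2)^t
  have hconv : (Fintype.card F : ℝ) ^ ((1:ℤ) - (d:ℤ))
      = (Fintype.card F : ℝ) * ((Fintype.card F : ℝ)^(d:ℕ))⁻¹ := by
    rw [zpow_sub₀ hqne, zpow_one, zpow_natCast, div_eq_mul_inv]
  rw [hconv]
  have e1 : (Fintype.card F : ℝ)^(d:ℕ) = (Fintype.card F : ℝ)^(d-1) * (Fintype.card F : ℝ) := by
    rw [← pow_succ]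
    congr 1
    omega
  have e2 : (Fintype.card F : ℝ)^(2*d-2)
      = (Fintype.card F : ℝ)^(d-1) * (Fintype.card F : ℝ)^(d-1) := by
    rw [← pow_add]
    congr 1
    omega
  have hqd1 : ((Fintype.card F : ℝ))^(d-1) ≠ 0 := by positivity
  rw [div_pow, e1, e2]
  field_simp
end

section
/- Fix positive integers k, d and m with 1 ≤ m ≤ d, and let q be a prime power with q > m(m−1)/2. Let f_1, …, f_k be chosen independently and uniformly at random from F_q[X_1,…,X_{k+1}]_{≤d}, and let Z denote the number of points x ∈ F_q^{k+1} with f_1(x) = ⋯ = f_k(x) = 0. Then the m-th moment of Z satisfies E[Z^m] = Σ_{r=1}^{m} C(q^{k+1}, r) · M_{r,m} · q^{−rk}, where C(N,r) denotes the binomial coefficient and M_{r,m} denotes the number of surjective functions from an m-element set onto an r-element set. -/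
set_option linter.unusedSectionVars false
set_option maxHeartbeats 1000000
open MvPolynomial Finset

variable {n : ℕ} {F : Type} [Field F] [Fintype F]

/-- Delta polynomial: 1 at `t`, 0 on the rest of `T`, degree ≤ |T| - 1. -/
lemma exists_delta (T : Finset (Fin n → F)) (t : Fin n → F) (ht : t ∈ T) :
    ∃ p : MvPolynomial (Fin n) F, p.totalDegree ≤ T.card - 1 ∧
      eval t p = 1 ∧ ∀ s ∈ T, s ≠ t → eval s p = 0 := by
  classical
  have hidx : ∀ s : {s // s ∈ T.erase t}, ∃ i, (s : Fin n → F) i ≠ t i := by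
    rintro ⟨s, hs⟩
    exact Function.ne_iff.mp (Finset.mem_erase.mp hs).1
  choose idx hidx using hidx
  set P : MvPolynomial (Fin n) F :=
    ∏ s ∈ (T.erase t).attach, (X (idx s) - C ((s : Fin n → F) (idx s))) with hP
  have hevalt : eval t P = ∏ s ∈ (T.erase t).attach, (t (idx s) - (s : Fin n → F) (idx s)) := by
    rw [hP, map_prod]
    simp
  have hne : eval t P ≠ 0 := by
    rw [hevalt]
    exact Finset.prod_ne_zero_iff.mpr fun s _ => sub_ne_zero_of_ne (hidx s).symm
  refine ⟨C (eval t P)⁻¹ * P, ?_, ?_, ?_⟩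
  · refine le_trans (totalDegree_mul _ _) ?_
    rw [totalDegree_C, zero_add]
    refine le_trans (totalDegree_finset_prod _ _) ?_
    have : ∀ s ∈ (T.erase t).attach,
        (X (idx s) - C ((s : Fin n → F) (idx s)) : MvPolynomial (Fin n) F).totalDegree ≤ 1 := by
      intro s _
      rw [sub_eq_add_neg, ← map_neg C]
      refine le_trans (totalDegree_add _ _) ?_
      simp [totalDegree_X]
    calc ∑ s ∈ (T.erase t).attach,
          (X (idx s) - C ((s : Fin n → F) (idx s)) : MvPolynomial (Fin n) F).totalDegree
        ≤ ∑ _s ∈ (T.erase t).attach, 1 := Finset.sum_le_sum this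
      _ = (T.erase t).card := by simp
      _ = T.card - 1 := Finset.card_erase_of_mem ht
  · rw [map_mul, eval_C, inv_mul_cancel₀ hne]
  · intro s hs hst
    have hs' : s ∈ T.erase t := Finset.mem_erase.mpr ⟨hst, hs⟩
    have hPz : eval s P = 0 := by
      rw [hP, map_prod]
      refine Finset.prod_eq_zero (Finset.mem_attach _ ⟨s, hs'⟩) ?_
      simp
    rw [map_mul, hPz, mul_zero]

lemma exists_interp (d : ℕ) (T : Finset (Fin n → F)) (hT : T.card ≤ d)
    (g : (Fin n → F) → F) :
    ∃ p : MvPolynomial (Fin n) F, p.totalDegree ≤ d ∧ ∀ x ∈ T, eval x p = g x := by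
  classical
  choose δ hδdeg hδ1 hδ0 using fun t : {t // t ∈ T} => exists_delta T t.1 t.2
  refine ⟨∑ t ∈ T.attach, C (g t.1) * δ t, ?_, ?_⟩
  · refine le_trans (totalDegree_finset_sum _ _) (Finset.sup_le fun t _ => ?_)
    refine le_trans (totalDegree_mul _ _) ?_
    rw [totalDegree_C, zero_add]
    exact le_trans (hδdeg t) (le_trans (Nat.sub_le _ _) hT)
  · intro x hx
    rw [map_sum, Finset.sum_eq_single_of_mem ⟨x, hx⟩ (Finset.mem_attach _ _)]
    · rw [map_mul, eval_C, hδ1 ⟨x, hx⟩, mul_one]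
    · rintro ⟨s, hs⟩ - hne
      rw [map_mul, hδ0 _ x hx (fun h => hne (Subtype.ext h.symm)), mul_zero]

/-- Counting polynomials vanishing on `T`. -/
lemma card_vanishing (d : ℕ) (T : Finset (Fin n → F)) (hT : T.card ≤ d) :
    Nat.card {p : MvPolynomial (Fin n) F // p.totalDegree ≤ d ∧ ∀ x ∈ T, eval x p = 0} *
      Fintype.card F ^ T.card
    = Nat.card {p : MvPolynomial (Fin n) F // p.totalDegree ≤ d} := by
  classical
  set W := restrictTotalDegree (Fin n) F d with hW
  haveI : Finite W := Module.finite_of_finite F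
  set φ : W →+ ({t // t ∈ T} → F) :=
    { toFun := fun p t => eval t.1 p.1
      map_zero' := by funext t; simp
      map_add' := by intro p q; funext t; simp } with hφ
  have hsurj : Function.Surjective φ := by
    intro g
    obtain ⟨p, hpd, hp⟩ := exists_interp d T hT
      (fun x => if h : x ∈ T then g ⟨x, h⟩ else 0)
    refine ⟨⟨p, ((MvPolynomial.mem_restrictTotalDegree _ _ _)).mpr hpd⟩, ?_⟩
    funext t
    simpa [hφ, dif_pos t.2] using hp t.1 t.2
  have h1 : Nat.card W = Nat.card ({t // t ∈ T} → F) * Nat.card φ.ker := by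
    rw [AddSubgroup.card_eq_card_quotient_mul_card_addSubgroup φ.ker,
      Nat.card_congr (QuotientAddGroup.quotientKerEquivOfSurjective φ hsurj).toEquiv]
  have h2 : Nat.card ({t // t ∈ T} → F) = Fintype.card F ^ T.card := by
    rw [Nat.card_eq_fintype_card, Fintype.card_fun, Fintype.card_coe]
  have h3 : Nat.card φ.ker =
      Nat.card {p : MvPolynomial (Fin n) F // p.totalDegree ≤ d ∧ ∀ x ∈ T, eval x p = 0} := by
    refine Nat.card_congr ⟨fun p => ⟨p.1.1, ((MvPolynomial.mem_restrictTotalDegree _ _ _)).mp p.1.2,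
        fun x hx => ?_⟩,
      fun p => ⟨⟨p.1, ((MvPolynomial.mem_restrictTotalDegree _ _ _)).mpr p.2.1⟩, ?_⟩,
      fun p => rfl, fun p => rfl⟩
    · have := p.2
      rw [AddMonoidHom.mem_ker] at this
      exact congrFun this ⟨x, hx⟩
    · rw [AddMonoidHom.mem_ker]
      funext t
      exact p.2.2 t.1 t.2
  have h4 : Nat.card W = Nat.card {p : MvPolynomial (Fin n) F // p.totalDegree ≤ d} :=
    Nat.card_congr (Equiv.subtypeEquivRight fun p =>
      (MvPolynomial.mem_restrictTotalDegree _ _ _))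
  rw [← h4, h1, h2, h3, mul_comm]


/-- Functions with prescribed image of size `r` are counted by surjections onto `Fin r`. -/
lemma card_image_fiber {V : Type*} [Fintype V] [DecidableEq V] (m r : ℕ)
    (T : Finset V) (hT : T.card = r) :
    Nat.card {φ : Fin m → V // Finset.univ.image φ = T} =
      Nat.card {g : Fin m → Fin r // Function.Surjective g} := by
  classical
  have e : {t // t ∈ T} ≃ Fin r := Fintype.equivFinOfCardEq (by simp [hT])
  have E1 : {φ : Fin m → V // Finset.univ.image φ = T} ≃
      {ψ : Fin m → {t // t ∈ T} // Function.Surjective ψ} := by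
    refine ⟨fun φ => ⟨fun j => ⟨φ.1 j, by
        have : φ.1 j ∈ Finset.univ.image φ.1 :=
          Finset.mem_image.mpr ⟨j, Finset.mem_univ _, rfl⟩
        rwa [φ.2] at this⟩, ?_⟩,
      fun ψ => ⟨fun j => (ψ.1 j).1, ?_⟩, fun φ => rfl, fun ψ => by
        refine Subtype.ext (funext fun j => Subtype.ext rfl)⟩
    · rintro ⟨t, ht⟩
      rw [← φ.2] at ht
      obtain ⟨j, -, hj⟩ := Finset.mem_image.mp ht
      exact ⟨j, Subtype.ext hj⟩
    · ext x
      simp only [Finset.mem_image, Finset.mem_univ, true_and]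
      constructor
      · rintro ⟨j, rfl⟩; exact (ψ.1 j).2
      · intro hx
        obtain ⟨j, hj⟩ := ψ.2 ⟨x, hx⟩
        exact ⟨j, by rw [hj]⟩
  have E2 : {ψ : Fin m → {t // t ∈ T} // Function.Surjective ψ} ≃
      {g : Fin m → Fin r // Function.Surjective g} :=
    ⟨fun ψ => ⟨fun j => e (ψ.1 j), fun x =>
        (ψ.2 (e.symm x)).imp fun j hj => by show e (ψ.1 j) = x; rw [hj, e.apply_symm_apply]⟩,
     fun g => ⟨fun j => e.symm (g.1 j), fun t =>
        (g.2 (e t)).imp fun j hj => by show e.symm (g.1 j) = t; rw [hj, e.symm_apply_apply]⟩,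
     fun ψ => Subtype.ext (funext fun j => e.symm_apply_apply _),
     fun g => Subtype.ext (funext fun j => e.apply_symm_apply _)⟩
  exact Nat.card_congr (E1.trans E2)

lemma finite_S (d : ℕ) : Finite {p : MvPolynomial (Fin n) F // p.totalDegree ≤ d} := by
  haveI : Finite (restrictTotalDegree (Fin n) F d) := Module.finite_of_finite F
  exact Finite.of_equiv _ (Equiv.subtypeEquivRight fun p =>
    (MvPolynomial.mem_restrictTotalDegree _ _ _))

lemma finite_vanish (d : ℕ) (T : Finset (Fin n → F)) :
    Finite {p : MvPolynomial (Fin n) F // p.totalDegree ≤ d ∧ ∀ x ∈ T, eval x p = 0} := by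
  haveI := finite_S (n := n) (F := F) d
  exact Finite.of_injective
    (fun p => (⟨p.1, p.2.1⟩ : {p : MvPolynomial (Fin n) F // p.totalDegree ≤ d}))
    (fun p q h => by
      simp only [Subtype.mk.injEq] at h
      exact Subtype.ext h)

lemma count_tuple (k d : ℕ) (T : Finset (Fin n → F)) :
    Nat.card {f : Fin k → MvPolynomial (Fin n) F //
        ∀ i, (f i).totalDegree ≤ d ∧ ∀ x ∈ T, eval x (f i) = 0}
    = Nat.card {p : MvPolynomial (Fin n) F //
        p.totalDegree ≤ d ∧ ∀ x ∈ T, eval x p = 0} ^ k := by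
  haveI := finite_vanish (n := n) (F := F) d T
  rw [Nat.card_congr (Equiv.subtypePiEquivPi
      (p := fun _ p => p.totalDegree ≤ d ∧ ∀ x ∈ T, eval x p = 0)),
    Nat.card_fun]
  simp


/-- Fix `k, d, m` with `1 ≤ m ≤ d`, and let `F` be a finite field of order
`q = Fintype.card F > m(m−1)/2`. If `f₁, …, f_k` are chosen independently and uniformly at
random among polynomials in `k+1` variables of total degree at most `d`, and `Z` is the
number of common zeros in `F^(k+1)`, then
`E[Z^m] = Σ_{r=1}^m C(q^(k+1), r) · M_{r,m} · q^(−rk)`, where `M_{r,m}` is the number of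
surjections from an `m`-set onto an `r`-set. Here the expectation is written in the
denominator-free form: the sum of `Z^m` over all tuples equals the right-hand side times the
number of tuples. -/
theorem statement_8 (k d m : ℕ) (hk : 0 < k) (hm : 1 ≤ m) (hmd : m ≤ d)
    (F : Type) [Field F] [Fintype F]
    (hq : m * (m - 1) / 2 < Fintype.card F) :
    ∑' f : {f : Fin k → MvPolynomial (Fin (k + 1)) F //
        ∀ i, (f i).totalDegree ≤ d},
      ((Nat.card {x : Fin (k + 1) → F //
          ∀ i, MvPolynomial.eval x (f.1 i) = 0} : ℝ)) ^ m =
    (∑ r ∈ Finset.Icc 1 m,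
        ((Fintype.card F ^ (k + 1)).choose r : ℝ) *
          (Nat.card {g : Fin m → Fin r // Function.Surjective g} : ℝ) *
          (Fintype.card F : ℝ) ^ (-((r * k : ℕ) : ℤ))) *
      Nat.card {f : Fin k → MvPolynomial (Fin (k + 1)) F //
        ∀ i, (f i).totalDegree ≤ d} := by
  classical
  set q := Fintype.card F with hqdef
  set V := (Fin (k + 1) → F) with hV
  set P := MvPolynomial (Fin (k + 1)) F with hP
  haveI hFinS : Finite {p : P // p.totalDegree ≤ d} := finite_S d
  haveI : Finite {f : Fin k → P // ∀ i, (f i).totalDegree ≤ d} :=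
    Finite.of_equiv _ (Equiv.subtypePiEquivPi (p := fun _ (p : P) => p.totalDegree ≤ d)).symm
  haveI : Fintype {f : Fin k → P // ∀ i, (f i).totalDegree ≤ d} := Fintype.ofFinite _
  set N := Nat.card {p : P // p.totalDegree ≤ d} with hN
  -- RHS tuple count
  have hD : Nat.card {f : Fin k → P // ∀ i, (f i).totalDegree ≤ d} = N ^ k := by
    rw [hN, Nat.card_congr (Equiv.subtypePiEquivPi (p := fun _ (p : P) => p.totalDegree ≤ d)),
      Nat.card_fun]
    simp
  rw [tsum_fintype, hD]
  -- step 1 : expand the m-th power as a sum over m-tuples of points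
  have step1 : ∀ f : {f : Fin k → P // ∀ i, (f i).totalDegree ≤ d},
      ((Nat.card {x : V // ∀ i, eval x (f.1 i) = 0} : ℝ)) ^ m
      = ∑ φ : Fin m → V, if (∀ j, ∀ i, eval (φ j) (f.1 i) = 0) then (1 : ℝ) else 0 := by
    intro f
    rw [Finset.sum_boole]
    norm_cast
    rw [Nat.card_eq_fintype_card, ← Fintype.card_subtype]
    calc Fintype.card {x : V // ∀ i, eval x (f.1 i) = 0} ^ m
        = Fintype.card (Fin m → {x : V // ∀ i, eval x (f.1 i) = 0}) := by
          rw [Fintype.card_fun]; simp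
      _ = Fintype.card {φ : Fin m → V // ∀ j, ∀ i, eval (φ j) (f.1 i) = 0} :=
          Fintype.card_congr
            (Equiv.subtypePiEquivPi (p := fun _ (x : V) => ∀ i, eval x (f.1 i) = 0)).symm
      _ = _ := by rw [Fintype.card_subtype]
  refine (Finset.sum_congr rfl fun f _ => step1 f).trans ?_
  rw [Finset.sum_comm]
  -- step 2 : the inner sum over tuples of polynomials
  have step2 : ∀ φ : Fin m → V,
      (∑ f : {f : Fin k → P // ∀ i, (f i).totalDegree ≤ d},
        if (∀ j, ∀ i, eval (φ j) (f.1 i) = 0) then (1 : ℝ) else 0)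
      = ((Nat.card {p : P // p.totalDegree ≤ d ∧
          ∀ x ∈ Finset.univ.image φ, eval x p = 0} : ℝ)) ^ k := by
    intro φ
    rw [Finset.sum_boole]
    norm_cast
    have E : {f : {f : Fin k → P // ∀ i, (f i).totalDegree ≤ d} //
          ∀ j, ∀ i, eval (φ j) (f.1 i) = 0} ≃
        {f : Fin k → P // ∀ i, (f i).totalDegree ≤ d ∧
          ∀ x ∈ Finset.univ.image φ, eval x (f i) = 0} :=
      ⟨fun f => ⟨f.1.1, fun i => ⟨f.1.2 i, fun x hx => by
          obtain ⟨j, -, rfl⟩ := Finset.mem_image.mp hx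
          exact f.2 j i⟩⟩,
       fun f => ⟨⟨f.1, fun i => (f.2 i).1⟩, fun j i =>
          (f.2 i).2 _ (Finset.mem_image.mpr ⟨j, Finset.mem_univ _, rfl⟩)⟩,
       fun f => rfl, fun f => rfl⟩
    rw [← Fintype.card_subtype, ← Nat.card_eq_fintype_card, Nat.card_congr E]
    exact count_tuple k d _
  simp only [step2]
  -- step 3 : rewrite the count via the vanishing-count formula
  have hqpos : (0 : ℝ) < (q : ℝ) := by
    rw [hqdef]; exact_mod_cast Fintype.card_pos
  have hcount : ∀ T : Finset V, T.card ≤ d →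
      ((Nat.card {p : P // p.totalDegree ≤ d ∧ ∀ x ∈ T, eval x p = 0} : ℝ)) ^ k
      = (N : ℝ) ^ k * (q : ℝ) ^ (-((T.card * k : ℕ) : ℤ)) := by
    intro T hT
    have h := card_vanishing d T hT
    have hc : ((Nat.card {p : P // p.totalDegree ≤ d ∧ ∀ x ∈ T, eval x p = 0} : ℝ))
        = (N : ℝ) * ((q : ℝ) ^ T.card)⁻¹ := by
      rw [eq_mul_inv_iff_mul_eq₀ (by positivity), hqdef, hN]
      exact_mod_cast h
    rw [hc, mul_pow, inv_pow, zpow_neg, zpow_natCast, pow_mul]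
  have himcard : ∀ φ : Fin m → V, (Finset.univ.image φ).card ≤ m := by
    intro φ
    exact le_trans Finset.card_image_le (by simp)
  have step3 : ∀ φ : Fin m → V,
      ((Nat.card {p : P // p.totalDegree ≤ d ∧
          ∀ x ∈ Finset.univ.image φ, eval x p = 0} : ℝ)) ^ k
      = (N : ℝ) ^ k * (q : ℝ) ^ (-(((Finset.univ.image φ).card * k : ℕ) : ℤ)) :=
    fun φ => hcount _ (le_trans (himcard φ) hmd)
  simp only [step3]
  -- step 4 : fiberwise over the image
  have hmaps : ∀ φ ∈ (Finset.univ : Finset (Fin m → V)),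
      Finset.univ.image φ ∈ (Finset.univ : Finset (Finset V)).filter
        (fun T => T.card ∈ Finset.Icc 1 m) := by
    intro φ _
    rw [Finset.mem_filter, Finset.mem_Icc]
    refine ⟨Finset.mem_univ _, ?_, himcard φ⟩
    haveI : NeZero m := ⟨Nat.one_le_iff_ne_zero.mp hm⟩
    exact Finset.card_pos.mpr ((Finset.univ_nonempty).image φ)
  have hfib := Finset.sum_fiberwise_of_maps_to'
    (s := (Finset.univ : Finset (Fin m → V)))
    (t := (Finset.univ : Finset (Finset V)).filter (fun T => T.card ∈ Finset.Icc 1 m))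
    (g := fun φ : Fin m → V => Finset.univ.image φ) hmaps
    (fun T : Finset V => (N : ℝ) ^ k * (q : ℝ) ^ (-((T.card * k : ℕ) : ℤ)))
  rw [← hfib]
  have hfib2 := Finset.sum_fiberwise_eq_sum_filter (Finset.univ : Finset (Finset V))
    (Finset.Icc 1 m) Finset.card
    (fun T : Finset V => ∑ _φ ∈ Finset.univ.filter (fun φ : Fin m → V => Finset.univ.image φ = T),
      (N : ℝ) ^ k * (q : ℝ) ^ (-((T.card * k : ℕ) : ℤ)))
  rw [← hfib2]
  -- step 5 : evaluate each inner sum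
  conv_rhs => rw [Finset.sum_mul]
  refine Finset.sum_congr rfl fun r hr => ?_
  have hVcard : Fintype.card V = q ^ (k + 1) := by
    show Fintype.card (Fin (k + 1) → F) = q ^ (k + 1)
    rw [Fintype.card_fun, hqdef]; simp
  have hsub : (Finset.univ : Finset (Finset V)).filter (fun T => T.card = r)
      = Finset.powersetCard r Finset.univ := by
    rw [Finset.powersetCard_eq_filter, Finset.powerset_univ]
  calc ∑ T ∈ (Finset.univ : Finset (Finset V)).filter (fun T => T.card = r),
        ∑ _φ ∈ Finset.univ.filter (fun φ : Fin m → V => Finset.univ.image φ = T),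
          (N : ℝ) ^ k * (q : ℝ) ^ (-((T.card * k : ℕ) : ℤ))
      = ∑ T ∈ (Finset.univ : Finset (Finset V)).filter (fun T => T.card = r),
        (Nat.card {g : Fin m → Fin r // Function.Surjective g} : ℝ) *
          ((N : ℝ) ^ k * (q : ℝ) ^ (-((r * k : ℕ) : ℤ))) := by
        refine Finset.sum_congr rfl fun T hT => ?_
        rw [Finset.mem_filter] at hT
        rw [Finset.sum_const, nsmul_eq_mul, hT.2]
        congr 2
        rw [← card_image_fiber m r T hT.2, Nat.card_eq_fintype_card, Fintype.card_subtype]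
    _ = _ := by
        rw [Finset.sum_const, nsmul_eq_mul, hsub, Finset.card_powersetCard, Finset.card_univ,
          hVcard]
        push_cast
        ring
end

section
/- Let U be a finite universe, and let C_1, …, C_k be collections of subsets of U satisfying: (a) for every tuple (S_1, …, S_k) ∈ C_1 × ⋯ × C_k, |S_1 ∩ ⋯ ∩ S_k| ≤ s; and (b) for every choice of pairs (ℓ_1, T_1), …, (ℓ_k, T_k) with T_j ∈ C_{ℓ_j}, the pairs pairwise distinct, and ℓ_i = ℓ_j for some i ≠ j, one has |T_1 ∩ ⋯ ∩ T_k| ≤ z. Let H be a bipartite graph with left vertex set A the disjoint union of A_1, …, A_k and right vertex set B, such that every tuple (a_1, …, a_k) ∈ A_1 × ⋯ × A_k has at most t common neighbours in B, and every k-element subset X ⊆ A with X ∩ A_i = ∅ for some i has at most w common neighbours in B. Let π_r : C_r → A_r be injections for r = 1, …, k, and for S ∈ C_r define ζ_r(S) = {(u,b) ∈ U × B : u ∈ S and π_r(S) is adjacent to b in H}. Then for every choice of pairwise distinct pairs (r_1, S_1), …, (r_k, S_k) with S_j ∈ C_{r_j}, one has |ζ_{r_1}(S_1) ∩ ⋯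 ∩ ζ_{r_k}(S_k)| ≤ max(s·t, z·w). -/

private lemma ncard_prod' {α β : Type*} (s : Set α) (t : Set β) :
    (s ×ˢ t).ncard = s.ncard * t.ncard := by
  rw [← Nat.card_coe_set_eq, ← Nat.card_coe_set_eq, ← Nat.card_coe_set_eq,
    ← Nat.card_prod]
  exact Nat.card_congr (Equiv.Set.prod s t)

private lemma sigma_cast_eq {k : ℕ} (A : Fin k → Type) {i j : Fin k} (h : j = i)
    (x : A j) : (⟨i, cast (congrArg A h) x⟩ : Σ i, A i) = ⟨j, x⟩ := by
  subst h; rfl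

/-- soundness of panchromatic graph composition. Let `U` be a finite
universe and `𝒞_1, …, 𝒞_k` collections of subsets of `U` with: (a) every tuple
`(S_1,…,S_k) ∈ 𝒞_1 × ⋯ × 𝒞_k` has `|S_1 ∩ ⋯ ∩ S_k| ≤ s`; (b) every family of pairwise
distinct pairs `(ℓ_1,T_1), …, (ℓ_k,T_k)` with `T_j ∈ 𝒞_{ℓ_j}` and `ℓ_i = ℓ_j` for some
`i ≠ j` has `|T_1 ∩ ⋯ ∩ T_k| ≤ z`. Let `H` be a bipartite graph with left vertex set the
disjoint union of `A_1, …, A_k` and right vertex set `B`, such that every tuple in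
`A_1 × ⋯ × A_k` has at most `t` common neighbours, and every `k`-element subset of the left
side missing some part `A_i` has at most `w` common neighbours. Let `π_r : 𝒞_r → A_r` be
injections and `ζ_r(S) = {(u,b) : u ∈ S and π_r(S) adjacent to b}`. Then for all pairwise
distinct pairs `(r_1,S_1), …, (r_k,S_k)` with `S_j ∈ 𝒞_{r_j}`,
`|ζ_{r_1}(S_1) ∩ ⋯ ∩ ζ_{r_k}(S_k)| ≤ max (s·t) (z·w)`. -/
theorem statement_12 (U : Type) [Fintype U] (k : ℕ) (hk : 0 < k)
    (s z t w : ℕ)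
    (𝒞 : Fin k → Set (Set U))
    (hs : ∀ S : (r : Fin k) → Set U, (∀ r, S r ∈ 𝒞 r) → (⋂ r, S r).ncard ≤ s)
    (hz : ∀ (ℓ : Fin k → Fin k) (T : Fin k → Set U),
      (∀ j, T j ∈ 𝒞 (ℓ j)) →
      Function.Injective (fun j => (ℓ j, T j)) →
      ¬ Function.Injective ℓ →
      (⋂ j, T j).ncard ≤ z)
    (A : Fin k → Type) [∀ i, Fintype (A i)] (B : Type) [Fintype B]
    (E : (Σ i, A i) → B → Prop)
    (ht : ∀ a : (i : Fin k) → A i, Nat.card {b : B // ∀ i, E ⟨i, a i⟩ b} ≤ t)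
    (hw : ∀ X : Finset (Σ i, A i), X.card = k → (∃ i, ∀ x ∈ X, x.1 ≠ i) →
      Nat.card {b : B // ∀ x ∈ X, E x b} ≤ w)
    (π : (r : Fin k) → (𝒞 r) → A r) (hπ : ∀ r, Function.Injective (π r))
    (rs : Fin k → Fin k) (S : (j : Fin k) → (𝒞 (rs j)))
    (hdist : Function.Injective (fun j => (rs j, (S j : Set U)))) :
    (⋂ j, {p : U × B |
        p.1 ∈ (S j : Set U) ∧ E ⟨rs j, π (rs j) (S j)⟩ p.2}).ncard ≤
      max (s * t) (z * w) := by
  classical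
  have hne : Nonempty (Fin k) := ⟨⟨0, hk⟩⟩
  set BS : Set B := {b | ∀ j, E ⟨rs j, π (rs j) (S j)⟩ b} with hBS
  have heq : (⋂ j, {p : U × B | p.1 ∈ (S j : Set U) ∧ E ⟨rs j, π (rs j) (S j)⟩ p.2})
      = (⋂ j, (S j : Set U)) ×ˢ BS := by
    ext ⟨u, b⟩
    simp only [Set.mem_iInter, Set.mem_setOf_eq, Set.mem_prod, BS]
    exact ⟨fun h => ⟨fun j => (h j).1, fun j => (h j).2⟩, fun h j => ⟨h.1 j, h.2 j⟩⟩
  rw [heq, ncard_prod']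
  by_cases hinj : Function.Injective rs
  · have hsurj : Function.Surjective rs := Finite.injective_iff_surjective.mp hinj
    set g : Fin k → Fin k := Function.invFun rs with hgdef
    have hg : ∀ i, rs (g i) = i := fun i => Function.invFun_eq (hsurj i)
    have h1 : (⋂ j, (S j : Set U)).ncard ≤ s := by
      have hsub : (⋂ j, (S j : Set U)) ⊆ ⋂ r, (S (g r) : Set U) := by
        intro x hx
        exact Set.mem_iInter.mpr fun r => Set.mem_iInter.mp hx (g r)
      refine le_trans (Set.ncard_le_ncard hsub (Set.toFinite _)) ?_
      refine hs _ fun r => ?_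
      have key : ∀ (r j : Fin k), rs j = r → (S j : Set U) ∈ 𝒞 r := by
        intro r j h; subst h; exact (S j).2
      exact key r (g r) (hg r)
    have h2 : BS.ncard ≤ t := by
      set a : (i : Fin k) → A i := fun i => cast (congrArg A (hg i)) (π (rs (g i)) (S (g i)))
        with hadef
    
      have hsub : BS ⊆ {b | ∀ i, E ⟨i, a i⟩ b} := by
        intro b hb i
        have : (⟨i, a i⟩ : Σ i, A i) = ⟨rs (g i), π (rs (g i)) (S (g i))⟩ :=
          sigma_cast_eq A (hg i) _
        rw [this]
        exact hb (g i)
      refine le_trans (Set.ncard_le_ncard hsub (Set.toFinite _)) ?_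
      have : ({b | ∀ i, E ⟨i, a i⟩ b} : Set B).ncard = Nat.card {b : B // ∀ i, E ⟨i, a i⟩ b} :=
        (Nat.card_coe_set_eq _).symm
      rw [this]
      exact ht a
    exact le_trans (Nat.mul_le_mul h1 h2) (le_max_left _ _)
  · have h1 : (⋂ j, (S j : Set U)).ncard ≤ z :=
      hz rs (fun j => (S j : Set U)) (fun j => (S j).2) hdist hinj
    have h2 : BS.ncard ≤ w := by
      set f : Fin k → (Σ i, A i) := fun j => ⟨rs j, π (rs j) (S j)⟩ with hfdef
      have hfg : f = (Sigma.map id (fun r => π r)) ∘ (fun j => (⟨rs j, S j⟩ : Σ r, 𝒞 r)) := rfl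
      have hginj : Function.Injective (fun j => (⟨rs j, S j⟩ : Σ r, 𝒞 r)) := by
        have : Function.Injective ((fun p : Σ r, 𝒞 r => (p.1, (p.2 : Set U))) ∘
            (fun j => (⟨rs j, S j⟩ : Σ r, 𝒞 r))) := hdist
        exact Function.Injective.of_comp this
      have hFinj : Function.Injective (Sigma.map (id : Fin k → Fin k) (fun r => π r)) :=
        Function.Injective.sigma_map Function.injective_id hπ
      have hfinj : Function.Injective f := by
        rw [hfg]; exact hFinj.comp hginj
      set X : Finset (Σ i, A i) := Finset.univ.image f with hXdef
      have hXcard : X.card = k := by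
        rw [hXdef, Finset.card_image_of_injective _ hfinj, Finset.card_univ, Fintype.card_fin]
      have hmiss : ∃ i, ∀ x ∈ X, x.1 ≠ i := by
        have : ¬ Function.Surjective rs := fun hsurj =>
          hinj (Finite.injective_iff_surjective.mpr hsurj)
        simp only [Function.Surjective, not_forall, not_exists] at this
        obtain ⟨i, hi⟩ := this
        refine ⟨i, fun x hx => ?_⟩
        rw [hXdef, Finset.mem_image] at hx
        obtain ⟨j, _, rfl⟩ := hx
        exact hi j
      have hsub : BS ⊆ {b | ∀ x ∈ X, E x b} := by
        intro b hb x hx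
        rw [hXdef, Finset.mem_image] at hx
        obtain ⟨j, _, rfl⟩ := hx
        exact hb j
      refine le_trans (Set.ncard_le_ncard hsub (Set.toFinite _)) ?_
      have : ({b | ∀ x ∈ X, E x b} : Set B).ncard = Nat.card {b : B // ∀ x ∈ X, E x b} :=
        (Nat.card_coe_set_eq _).symm
      rw [this]
      exact hw X hXcard hmiss
    exact le_trans (Nat.mul_le_mul h1 h2) (le_max_right _ _)
end
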